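/- arXiv:math/0602036 — 2 statements merged into one kernel-verified Lean document; each statement's English description precedes it below -/
import Mathlib

section
/- If G is a subgroup of PL₊(I) whose depth (supremum of heights of towers of G) equals n for a positive integer n, then the derived subgroup G' has depth exactly n−1. -/
/-- The support of a map of the line: points it moves. -/
def Supp (f : ℝ → ℝ) : Set ℝ := {x | f x ≠ x}

/-- `A` is an orbital of `f`: a connected component of the support of `f`. -/
def IsOrbital (f : ℝ → ℝ) (A : Set ℝ) : Prop :=
  ∃ x ∈ Supp f, A = connectedComponentIn (Supp f) x

/-- An orientation-preserving homeomorphism of `[0,1]`, encoded as a strictly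
increasing bijection of `ℝ` fixing every point outside `(0,1)`. -/
def Homeo01 (f : Equiv.Perm ℝ) : Prop :=
  StrictMono f ∧ ∀ x ∉ Set.Ioo (0:ℝ) 1, f x = x

/-- `f` is affine in a neighbourhood of `x`. -/
def LocallyAffineAt (f : ℝ → ℝ) (x : ℝ) : Prop :=
  ∃ ε > 0, ∃ m b : ℝ, ∀ y : ℝ, |y - x| < ε → f y = m * y + b

/-- Piecewise linear with finitely many breakpoints. -/
def IsPL (f : ℝ → ℝ) : Prop := {x | ¬ LocallyAffineAt f x}.Finite

/-- Membership in `PL₊(I)`. -/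
def PLHomeo (f : Equiv.Perm ℝ) : Prop := Homeo01 f ∧ IsPL f

/-- Support of the action of a subgroup. -/
def GSupp (G : Subgroup (Equiv.Perm ℝ)) : Set ℝ := {x | ∃ g ∈ G, g x ≠ x}

/-- An orbital of a subgroup: a component of the support of its action. -/
def IsGroupOrbital (G : Subgroup (Equiv.Perm ℝ)) (A : Set ℝ) : Prop :=
  ∃ x ∈ GSupp G, A = connectedComponentIn (GSupp G) x

/-- `b` is a breakpoint of `f`: one-sided derivatives exist but differ. -/
def Breakpoint (f : ℝ → ℝ) (b : ℝ) : Prop :=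
  b ∈ Set.Ioo (0:ℝ) 1 ∧
  DifferentiableWithinAt ℝ f (Set.Iio b) b ∧
  DifferentiableWithinAt ℝ f (Set.Ioi b) b ∧
  derivWithin f (Set.Iio b) b ≠ derivWithin f (Set.Ioi b) b

/-- `G` admits a transition chain of length two. -/
def HasTransitionChain2 (G : Subgroup (Equiv.Perm ℝ)) : Prop :=
  ∃ g ∈ G, ∃ h ∈ G, ∃ a₁ b₁ a₂ b₂ : ℝ,
    IsOrbital g (Set.Ioo a₁ a₂) ∧ IsOrbital h (Set.Ioo b₁ b₂) ∧
    a₁ < b₁ ∧ b₁ < a₂ ∧ a₂ < b₂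

/-- A tower of the subgroup `G`: a set of signed orbitals `(A, g)` whose orbitals
form a chain under inclusion, with exactly one signature per orbital. -/
def IsTower (G : Subgroup (Equiv.Perm ℝ)) (T : Set (Set ℝ × Equiv.Perm ℝ)) : Prop :=
  (∀ p ∈ T, p.2 ∈ G ∧ IsOrbital p.2 p.1) ∧
  (∀ p ∈ T, ∀ q ∈ T, p.1 ⊆ q.1 ∨ q.1 ⊆ p.1) ∧
  (∀ p ∈ T, ∀ q ∈ T, p.1 = q.1 → p = q)

/-- The depth of `G` equals `n`: there is a tower of height `n` and every tower
is finite with height at most `n`. -/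
def DepthEq (G : Subgroup (Equiv.Perm ℝ)) (n : ℕ) : Prop :=
  (∃ T, IsTower G T ∧ T.Finite ∧ T.ncard = n) ∧
  ∀ T, IsTower G T → T.Finite ∧ T.ncard ≤ n


open Set
open scoped commutatorElement

theorem Equiv.Perm.apply_inv_self {α : Type*} (f : Equiv.Perm α) (x : α) : f (f⁻¹ x) = x :=
  f.apply_symm_apply x

theorem Equiv.Perm.inv_apply_self {α : Type*} (f : Equiv.Perm α) (x : α) : f⁻¹ (f x) = x :=
  f.symm_apply_apply x

namespace PLdepth

variable {g h w : Equiv.Perm ℝ}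

/-! ### Basic facts about Homeo01 elements -/

lemma cont (hg : Homeo01 g) : Continuous g := by
  have : ⇑(StrictMono.orderIsoOfSurjective ⇑g hg.1 g.surjective) = ⇑g := rfl
  rw [← this]; exact OrderIso.continuous _

lemma homeo_inv (hg : Homeo01 g) : Homeo01 g⁻¹ := by
  constructor
  · intro x y hxy
    rcases lt_trichotomy (g⁻¹ x) (g⁻¹ y) with h | h | h
    · exact h
    · exfalso; rw [← g.apply_inv_self x, ← g.apply_inv_self y, h] at hxy; exact lt_irrefl _ hxy
    · exfalso
      have := hg.1 h
      rw [g.apply_inv_self, g.apply_inv_self] at this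
      exact lt_asymm hxy this
  · intro x hx
    have := hg.2 x hx
    conv_lhs => rw [← this]
    exact g.inv_apply_self x

lemma fix_iff_inv_fix (x : ℝ) : g⁻¹ x = x ↔ g x = x := by
  constructor
  · intro h; conv_lhs => rw [← h, g.apply_inv_self]
  · intro h; conv_lhs => rw [← h, g.inv_apply_self]

lemma supp_inv : Supp ⇑g⁻¹ = Supp ⇑g := by
  ext x; simp only [Supp, mem_setOf_eq, not_iff_not]; exact fix_iff_inv_fix x

lemma image_Ioo (hg : Homeo01 g) (a b : ℝ) : ⇑g '' Ioo a b = Ioo (g a) (g b) := by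
  have : ⇑(StrictMono.orderIsoOfSurjective ⇑g hg.1 g.surjective) = ⇑g := rfl
  rw [← this]
  exact (StrictMono.orderIsoOfSurjective ⇑g hg.1 g.surjective).image_Ioo a b

lemma supp_open (hg : Homeo01 g) : IsOpen (Supp ⇑g) := by
  have : Supp ⇑g = {x | g x ≠ x} := rfl
  rw [this]
  exact isOpen_ne_fun (cont hg) continuous_id

lemma supp_subset (hg : Homeo01 g) : Supp ⇑g ⊆ Ioo (0:ℝ) 1 := by
  intro x hx
  by_contra hc
  exact hx (hg.2 x hc)

lemma mul_apply (x : ℝ) : (g * h) x = g (h x) := rfl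

lemma pow_apply_comm (k : ℕ) (x : ℝ) : (g ^ k) (g x) = g ((g ^ k) x) := by
  induction k with
  | zero => simp
  | succ m ih => rw [pow_succ', mul_apply, mul_apply, ih]

end PLdepth

namespace PLdepth2
open PLdepth

/-! ### interval representation -/

lemma open_preconn_eq_Ioo {A : Set ℝ} (hA : IsOpen A) (hc : IsPreconnected A)
    (hne : A.Nonempty) (hbb : BddBelow A) (hba : BddAbove A) :
    A = Ioo (sInf A) (sSup A) := by
  have hord := hc.ordConnected
  apply Subset.antisymm
  · intro x hx
    constructor
    · rcases lt_or_eq_of_le (csInf_le hbb hx) with h | h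
      · exact h
      · exfalso
        rcases Metric.isOpen_iff.1 hA x hx with ⟨ε, hε, hball⟩
        have hmem : x - ε/2 ∈ A := by
          apply hball
          rw [Metric.mem_ball, Real.dist_eq, show x - ε/2 - x = -(ε/2) by ring, abs_neg,
            abs_of_nonneg (by linarith)]
          linarith
        have := csInf_le hbb hmem
        rw [← h] at this; linarith
    · rcases lt_or_eq_of_le (le_csSup hba hx) with h | h
      · exact h
      · exfalso
        rcases Metric.isOpen_iff.1 hA x hx with ⟨ε, hε, hball⟩
        have hmem : x + ε/2 ∈ A := by
          apply hball
          rw [Metric.mem_ball, Real.dist_eq, show x + ε/2 - x = ε/2 by ring,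
            abs_of_nonneg (by linarith)]
          linarith
        have := le_csSup hba hmem
        rw [h] at this; linarith
  · intro x hx
    obtain ⟨a, ha, hax⟩ := exists_lt_of_csInf_lt hne hx.1
    obtain ⟨b, hb, hxb⟩ := exists_lt_of_lt_csSup hne hx.2
    exact hord.out ha hb ⟨hax.le, hxb.le⟩

lemma sInf_not_mem_of_open {A : Set ℝ} (hA : IsOpen A) (hbb : BddBelow A) : sInf A ∉ A := by
  intro hx
  rcases Metric.isOpen_iff.1 hA _ hx with ⟨ε, hε, hb⟩
  have hmem : sInf A - ε/2 ∈ A := by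
    apply hb
    rw [Metric.mem_ball, Real.dist_eq, show sInf A - ε/2 - sInf A = -(ε/2) by ring, abs_neg,
      abs_of_nonneg (by linarith)]
    linarith
  have := csInf_le hbb hmem
  linarith

lemma sSup_not_mem_of_open {A : Set ℝ} (hA : IsOpen A) (hba : BddAbove A) : sSup A ∉ A := by
  intro hx
  rcases Metric.isOpen_iff.1 hA _ hx with ⟨ε, hε, hb⟩
  have hmem : sSup A + ε/2 ∈ A := by
    apply hb
    rw [Metric.mem_ball, Real.dist_eq, show sSup A + ε/2 - sSup A = ε/2 by ring,
      abs_of_nonneg (by linarith)]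
    linarith
  have := le_csSup hba hmem
  linarith

lemma mem_supp_iff {f : ℝ → ℝ} {x : ℝ} : x ∈ Supp f ↔ f x ≠ x := Iff.rfl

variable {g h w : Equiv.Perm ℝ} {A B : Set ℝ}

lemma orbital_subset (hA : IsOrbital ⇑g A) : A ⊆ Supp ⇑g := by
  obtain ⟨x, hx, rfl⟩ := hA; exact connectedComponentIn_subset _ _

lemma orbital_nonempty (hA : IsOrbital ⇑g A) : A.Nonempty := by
  obtain ⟨x, hx, rfl⟩ := hA
  exact ⟨x, mem_connectedComponentIn hx⟩

lemma orbital_open (hg : Homeo01 g) (hA : IsOrbital ⇑g A) : IsOpen A := by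
  obtain ⟨x, hx, rfl⟩ := hA; exact (supp_open hg).connectedComponentIn

lemma orbital_preconn (hA : IsOrbital ⇑g A) : IsPreconnected A := by
  obtain ⟨x, hx, rfl⟩ := hA; exact isPreconnected_connectedComponentIn

lemma orbital_bddBelow (hg : Homeo01 g) (hA : IsOrbital ⇑g A) : BddBelow A :=
  (bddBelow_Ioo : BddBelow (Ioo (0:ℝ) 1)).mono ((orbital_subset hA).trans (supp_subset hg))

lemma orbital_bddAbove (hg : Homeo01 g) (hA : IsOrbital ⇑g A) : BddAbove A :=
  (bddAbove_Ioo : BddAbove (Ioo (0:ℝ) 1)).mono ((orbital_subset hA).trans (supp_subset hg))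

lemma orbital_eq_Ioo (hg : Homeo01 g) (hA : IsOrbital ⇑g A) :
    A = Ioo (sInf A) (sSup A) :=
  open_preconn_eq_Ioo (orbital_open hg hA) (orbital_preconn hA) (orbital_nonempty hA)
    (orbital_bddBelow hg hA) (orbital_bddAbove hg hA)

lemma orbital_inf_lt_sup (hg : Homeo01 g) (hA : IsOrbital ⇑g A) : sInf A < sSup A := by
  obtain ⟨x, hx⟩ := orbital_nonempty hA
  rw [orbital_eq_Ioo hg hA] at hx
  exact lt_trans hx.1 hx.2

/-- a point of the boundary of an orbital is not in the support -/
lemma orbital_boundary_not_supp (hg : Homeo01 g) (hA : IsOrbital ⇑g A)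
    {y : ℝ} (hy : y ∉ A) (hcl : ∀ ε > 0, ∃ z ∈ A, |z - y| < ε) : y ∉ Supp ⇑g := by
  intro hy'
  have hopen := supp_open hg
  rcases Metric.isOpen_iff.1 hopen y hy' with ⟨ε, hε, hball⟩
  obtain ⟨z, hz, hzy⟩ := hcl ε hε
  have hzc : z ∈ connectedComponentIn (Supp ⇑g) y := by
    have hball' : Metric.ball y ε ⊆ connectedComponentIn (Supp ⇑g) y := by
      apply IsPreconnected.subset_connectedComponentIn _ (Metric.mem_ball_self hε) hball
      exact (convex_ball y ε).isPreconnected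
    exact hball' (by simpa [Real.dist_eq] using hzy)
  obtain ⟨x₀, hx₀, rfl⟩ := hA
  have h1 : connectedComponentIn (Supp ⇑g) z = connectedComponentIn (Supp ⇑g) x₀ :=
    (connectedComponentIn_eq hz).symm
  have h2 : connectedComponentIn (Supp ⇑g) z = connectedComponentIn (Supp ⇑g) y :=
    (connectedComponentIn_eq hzc).symm
  have : y ∈ connectedComponentIn (Supp ⇑g) x₀ := by
    rw [← h1, h2]; exact mem_connectedComponentIn hy'
  exact hy this

lemma orbital_fix_inf (hg : Homeo01 g) (hA : IsOrbital ⇑g A) : g (sInf A) = sInf A := by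
  by_contra hc
  have hni : sInf A ∉ A := sInf_not_mem_of_open (orbital_open hg hA) (orbital_bddBelow hg hA)
  refine orbital_boundary_not_supp hg hA hni ?_ hc
  intro ε hε
  have h1 : sInf A < sSup A := orbital_inf_lt_sup hg hA
  have h2 : sInf A < min (sInf A + ε) (sSup A) := by
    simp only [lt_min_iff]; exact ⟨by linarith, h1⟩
  obtain ⟨z, hz, hz2⟩ := exists_lt_of_csInf_lt (orbital_nonempty hA) h2
  refine ⟨z, hz, ?_⟩
  have := csInf_le (orbital_bddBelow hg hA) hz
  rw [abs_of_nonneg (by linarith)]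
  have := lt_min_iff.1 hz2
  linarith [this.1]

lemma orbital_fix_sup (hg : Homeo01 g) (hA : IsOrbital ⇑g A) : g (sSup A) = sSup A := by
  by_contra hc
  have hni : sSup A ∉ A := sSup_not_mem_of_open (orbital_open hg hA) (orbital_bddAbove hg hA)
  refine orbital_boundary_not_supp hg hA hni ?_ hc
  intro ε hε
  have h1 : sInf A < sSup A := orbital_inf_lt_sup hg hA
  have h2 : max (sSup A - ε) (sInf A) < sSup A := by
    simp only [max_lt_iff]; exact ⟨by linarith, h1⟩
  obtain ⟨z, hz, hz2⟩ := exists_lt_of_lt_csSup (orbital_nonempty hA) h2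
  refine ⟨z, hz, ?_⟩
  have := le_csSup (orbital_bddAbove hg hA) hz
  rw [abs_of_nonpos (by linarith)]
  have := max_lt_iff.1 hz2
  linarith [this.1]

lemma orbital_image (hg : Homeo01 g) (hA : IsOrbital ⇑g A) : ⇑g '' A = A := by
  conv_lhs => rw [orbital_eq_Ioo hg hA]
  rw [image_Ioo hg, orbital_fix_inf hg hA, orbital_fix_sup hg hA, ← orbital_eq_Ioo hg hA]

lemma orbital_mem_image (hg : Homeo01 g) (hA : IsOrbital ⇑g A) {x : ℝ} (hx : x ∈ A) :
    g x ∈ A := by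
  rw [← orbital_image hg hA]; exact mem_image_of_mem _ hx

lemma orbital_sign (hg : Homeo01 g) (hA : IsOrbital ⇑g A) :
    (∀ x ∈ A, x < g x) ∨ (∀ x ∈ A, g x < x) := by
  by_contra hc
  push_neg at hc
  obtain ⟨⟨u, hu, hu2⟩, ⟨v, hv, hv2⟩⟩ := hc
  have hU : IsOpen {x : ℝ | g x < x} := isOpen_lt (cont hg) continuous_id
  have hV : IsOpen {x : ℝ | x < g x} := isOpen_lt continuous_id (cont hg)
  have hcover : A ⊆ {x : ℝ | g x < x} ∪ {x : ℝ | x < g x} := by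
    intro x hx
    rcases lt_or_gt_of_ne (orbital_subset hA hx) with h | h
    · exact Or.inl h
    · exact Or.inr h
  have h1 : (A ∩ ({x : ℝ | g x < x} ∩ {x : ℝ | x < g x})).Nonempty := by
    apply orbital_preconn hA _ _ hU hV hcover
    · exact ⟨u, hu, lt_of_le_of_ne hu2 (mem_supp_iff.1 (orbital_subset hA hu))⟩
    · exact ⟨v, hv, lt_of_le_of_ne hv2 fun hh => (mem_supp_iff.1 (orbital_subset hA hv)) hh.symm⟩
  obtain ⟨x, _, hx1, hx2⟩ := h1
  simp only [mem_setOf_eq] at hx1 hx2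
  exact lt_asymm hx1 hx2

end PLdepth2

namespace PLdepth3
open PLdepth PLdepth2

variable {g h w : Equiv.Perm ℝ} {A B : Set ℝ}

lemma homeo_mul (hg : Homeo01 g) (hh : Homeo01 h) : Homeo01 (g * h) := by
  constructor
  · intro x y hxy
    exact hg.1 (hh.1 hxy)
  · intro x hx
    rw [mul_apply, hh.2 x hx, hg.2 x hx]

lemma homeo_pow (hg : Homeo01 g) (k : ℕ) : Homeo01 (g ^ k) := by
  induction k with
  | zero => exact ⟨fun x y hxy => by simpa using hxy, fun x _ => by simp⟩
  | succ m ih => rw [pow_succ]; exact homeo_mul ih hg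

lemma supp_conj : Supp ⇑(w * g * w⁻¹) = ⇑w '' Supp ⇑g := by
  ext x
  rw [Equiv.image_eq_preimage_symm]
  simp only [mem_supp_iff, mem_preimage]
  constructor
  · intro hx hc
    apply hx
    have : (w * g * w⁻¹) x = w (g (w.symm x)) := rfl
    rw [this, hc]
    exact w.apply_symm_apply x
  · intro hx hc
    apply hx
    have : (w * g * w⁻¹) x = w (g (w.symm x)) := hc ▸ rfl
    have h2 : w (g (w.symm x)) = x := hc
    have := congrArg w.symm h2
    rw [w.symm_apply_apply] at this
    exact this

noncomputable def toHomeomorph (w : Equiv.Perm ℝ) (hw : Homeo01 w) : ℝ ≃ₜ ℝ where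
  toEquiv := (w : Equiv ℝ ℝ)
  continuous_toFun := cont hw
  continuous_invFun := by exact cont (homeo_inv hw)

lemma toHomeomorph_coe (hw : Homeo01 w) : ⇑(toHomeomorph w hw) = ⇑w := rfl

lemma orbital_conj (hw : Homeo01 w) (hA : IsOrbital ⇑g A) :
    IsOrbital ⇑(w * g * w⁻¹) (⇑w '' A) := by
  obtain ⟨x, hx, rfl⟩ := hA
  refine ⟨w x, ?_, ?_⟩
  · rw [supp_conj]; exact mem_image_of_mem _ hx
  · rw [supp_conj, ← toHomeomorph_coe hw, ← (toHomeomorph w hw).image_connectedComponentIn hx,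
      toHomeomorph_coe hw]

lemma pow_mem_orbital (hh : Homeo01 h) (hB : IsOrbital ⇑h B) {x : ℝ} (hx : x ∈ B) (k : ℕ) :
    (h ^ k) x ∈ B := by
  induction k with
  | zero => simpa using hx
  | succ m ih =>
    rw [pow_succ', mul_apply]
    exact orbital_mem_image hh hB ih

lemma pow_fix (hfix : h x₀ = x₀) (k : ℕ) : (h ^ k) x₀ = x₀ := by
  induction k with
  | zero => simp
  | succ m ih => rw [pow_succ', mul_apply, ih, hfix]

lemma reach_up (hh : Homeo01 h) (hB : IsOrbital ⇑h B) (hup : ∀ x ∈ B, x < h x)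
    {z wpt : ℝ} (hz : z ∈ B) (hw : wpt ∈ B) : ∃ k : ℕ, wpt < (h ^ k) z := by
  by_contra hc
  push_neg at hc
  set S := range (fun k : ℕ => (h ^ k) z) with hS
  have hSB : S ⊆ B := by rintro _ ⟨k, rfl⟩; exact pow_mem_orbital hh hB hz k
  have hSne : S.Nonempty := ⟨z, 0, by simp⟩
  have hSbdd : BddAbove S := (orbital_bddAbove hh hB).mono hSB
  set σ := sSup S with hσ
  have hmap : h σ = sSup (⇑h '' S) :=
    Monotone.map_csSup_of_continuousAt (cont hh).continuousAt hh.1.monotone hSne hSbdd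
  have himg : ⇑h '' S = range (fun k : ℕ => (h ^ (k+1)) z) := by
    have hcomp : ⇑h ∘ (fun k : ℕ => (h ^ k) z) = fun k : ℕ => (h ^ (k+1)) z := by
      funext k; simp only [Function.comp_apply]; rw [pow_succ', mul_apply]
    rw [hS, ← range_comp, hcomp]
  have hfix : h σ = σ := by
    rw [hmap, himg]
    apply le_antisymm
    · apply csSup_le (⟨_, ⟨0, rfl⟩⟩ : (range fun k : ℕ => (h ^ (k+1)) z).Nonempty)
      rintro _ ⟨k, rfl⟩
      exact le_csSup hSbdd ⟨k+1, rfl⟩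
    · apply csSup_le hSne
      rintro _ ⟨k, rfl⟩
      have h1 : (h ^ k) z < (h ^ (k+1)) z := by
        rw [pow_succ', mul_apply]
        exact hup _ (pow_mem_orbital hh hB hz k)
      have hbdd2 : BddAbove (range (fun k : ℕ => (h ^ (k+1)) z)) := by
        apply (orbital_bddAbove hh hB).mono
        rintro _ ⟨k, rfl⟩
        exact pow_mem_orbital hh hB hz (k+1)
      exact le_trans h1.le (le_csSup hbdd2 ⟨k, rfl⟩)
  have hσB : σ ∈ B := by
    rw [orbital_eq_Ioo hh hB]
    constructor
    · have h1 : z ≤ σ := le_csSup hSbdd ⟨0, by simp⟩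
      have h2 : sInf B < z := by rw [orbital_eq_Ioo hh hB] at hz; exact hz.1
      linarith
    · have h1 : σ ≤ wpt := csSup_le hSne (by rintro _ ⟨k, rfl⟩; exact hc k)
      have h2 : wpt < sSup B := by rw [orbital_eq_Ioo hh hB] at hw; exact hw.2
      linarith
  have hlt := hup σ hσB
  rw [hfix] at hlt
  exact lt_irrefl σ hlt

lemma reach_down (hh : Homeo01 h) (hB : IsOrbital ⇑h B) (hdown : ∀ x ∈ B, h x < x)
    {z wpt : ℝ} (hz : z ∈ B) (hw : wpt ∈ B) : ∃ k : ℕ, (h ^ k) z < wpt := by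
  by_contra hc
  push_neg at hc
  set S := range (fun k : ℕ => (h ^ k) z) with hS
  have hSB : S ⊆ B := by rintro _ ⟨k, rfl⟩; exact pow_mem_orbital hh hB hz k
  have hSne : S.Nonempty := ⟨z, 0, by simp⟩
  have hSbdd : BddBelow S := (orbital_bddBelow hh hB).mono hSB
  set σ := sInf S with hσ
  have hmap : h σ = sInf (⇑h '' S) :=
    Monotone.map_csInf_of_continuousAt (cont hh).continuousAt hh.1.monotone hSne hSbdd
  have himg : ⇑h '' S = range (fun k : ℕ => (h ^ (k+1)) z) := by
    have hcomp : ⇑h ∘ (fun k : ℕ => (h ^ k) z) = fun k : ℕ => (h ^ (k+1)) z := by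
      funext k; simp only [Function.comp_apply]; rw [pow_succ', mul_apply]
    rw [hS, ← range_comp, hcomp]
  have hfix : h σ = σ := by
    rw [hmap, himg]
    apply le_antisymm
    · apply le_csInf hSne
      rintro _ ⟨k, rfl⟩
      have h1 : (h ^ (k+1)) z < (h ^ k) z := by
        rw [pow_succ', mul_apply]
        exact hdown _ (pow_mem_orbital hh hB hz k)
      have hbdd2 : BddBelow (range (fun k : ℕ => (h ^ (k+1)) z)) := by
        apply (orbital_bddBelow hh hB).mono
        rintro _ ⟨k, rfl⟩
        exact pow_mem_orbital hh hB hz (k+1)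
      exact le_trans (csInf_le hbdd2 ⟨k, rfl⟩) h1.le
    · apply le_csInf (⟨_, ⟨0, rfl⟩⟩ : (range fun k : ℕ => (h ^ (k+1)) z).Nonempty)
      rintro _ ⟨k, rfl⟩
      exact csInf_le hSbdd ⟨k+1, rfl⟩
  have hσB : σ ∈ B := by
    rw [orbital_eq_Ioo hh hB]
    constructor
    · have h1 : wpt ≤ σ := le_csInf hSne (by rintro _ ⟨k, rfl⟩; exact hc k)
      have h2 : sInf B < wpt := by rw [orbital_eq_Ioo hh hB] at hw; exact hw.1
      linarith
    · have h1 : σ ≤ z := csInf_le hSbdd ⟨0, by simp⟩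
      have h2 : z < sSup B := by rw [orbital_eq_Ioo hh hB] at hz; exact hz.2
      linarith
  have hlt := hdown σ hσB
  rw [hfix] at hlt
  exact lt_irrefl σ hlt

end PLdepth3

namespace PLdepth4
open PLdepth PLdepth2 PLdepth3

lemma affine_on_Ioo {f : ℝ → ℝ} {a b : ℝ} (hab : a < b)
    (h : ∀ x ∈ Ioo a b, LocallyAffineAt f x) :
    ∃ m c : ℝ, ∀ x ∈ Ioo a b, f x = m * x + c := by
  have hx₀ : (a+b)/2 ∈ Ioo a b := ⟨by linarith, by linarith⟩
  obtain ⟨ε₀, hε₀, m, c, hmc⟩ := h _ hx₀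
  set U : Set ℝ := {x | ∃ ε > 0, ∀ y, |y - x| < ε → f y = m * y + c} with hU
  set V : Set ℝ := {x | ∃ ε > 0, ∃ m' c' : ℝ, (m ≠ m' ∨ c ≠ c') ∧
    ∀ y, |y - x| < ε → f y = m' * y + c'} with hV
  have hUopen : IsOpen U := by
    rw [Metric.isOpen_iff]
    rintro x ⟨ε, hε, hx⟩
    refine ⟨ε/2, by linarith, fun y hy => ⟨ε/2, by linarith, fun z hz => hx z ?_⟩⟩
    rw [Metric.mem_ball, Real.dist_eq] at hy
    have habs : |z - x| ≤ |z - y| + |y - x| := abs_sub_le _ _ _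
    linarith
  have hVopen : IsOpen V := by
    rw [Metric.isOpen_iff]
    rintro x ⟨ε, hε, m', c', hne, hx⟩
    refine ⟨ε/2, by linarith, fun y hy => ⟨ε/2, by linarith, m', c', hne, fun z hz => hx z ?_⟩⟩
    rw [Metric.mem_ball, Real.dist_eq] at hy
    have habs : |z - x| ≤ |z - y| + |y - x| := abs_sub_le _ _ _
    linarith
  have hcover : Ioo a b ⊆ U ∪ V := by
    intro x hx
    obtain ⟨ε, hε, m', c', hmc'⟩ := h x hx
    by_cases hc : m = m' ∧ c = c'
    · exact Or.inl ⟨ε, hε, by rw [hc.1, hc.2]; exact hmc'⟩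
    · rw [not_and_or] at hc
      exact Or.inr ⟨ε, hε, m', c', hc, hmc'⟩
  have hmain : Ioo a b ⊆ U := by
    by_contra hcc
    obtain ⟨x₁, hx₁, hx₁U⟩ := not_subset.1 hcc
    have hx₁V : x₁ ∈ V := (hcover hx₁).resolve_left hx₁U
    have hne1 : (Ioo a b ∩ U).Nonempty := ⟨_, hx₀, ε₀, hε₀, hmc⟩
    have hne2 : (Ioo a b ∩ V).Nonempty := ⟨x₁, hx₁, hx₁V⟩
    obtain ⟨x, hx, hxU, hxV⟩ :=
      isPreconnected_Ioo (a := a) (b := b) U V hUopen hVopen hcover hne1 hne2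
    obtain ⟨ε, hε, hfx⟩ := hxU
    obtain ⟨ε', hε', m', c', hne, hfx'⟩ := hxV
    set δ := min ε ε' with hδ
    have hδpos : 0 < δ := lt_min hε hε'
    have h1 : f x = m * x + c := hfx x (by simp [abs_of_nonneg, hε])
    have h1' : f x = m' * x + c' := hfx' x (by simp [abs_of_nonneg, hε'])
    have h2 : f (x + δ/2) = m * (x + δ/2) + c := by
      apply hfx
      rw [show x + δ/2 - x = δ/2 by ring, abs_of_nonneg (by linarith)]
      have : δ ≤ ε := min_le_left _ _
      linarith
    have h2' : f (x + δ/2) = m' * (x + δ/2) + c' := by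
      apply hfx'
      rw [show x + δ/2 - x = δ/2 by ring, abs_of_nonneg (by linarith)]
      have : δ ≤ ε' := min_le_right _ _
      linarith
    have hm : m = m' := by
      have e1 : m * x + c = m' * x + c' := h1 ▸ h1'
      have e2 : m * (x + δ/2) + c = m' * (x + δ/2) + c' := h2 ▸ h2'
      nlinarith
    have hcc2 : c = c' := by
      have e1 : m * x + c = m' * x + c' := h1 ▸ h1'
      rw [hm] at e1; linarith
    rcases hne with hh | hh
    · exact hh hm
    · exact hh hcc2
  refine ⟨m, c, fun x hx => ?_⟩
  obtain ⟨ε, hε, hfx⟩ := hmain hx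
  exact hfx x (by simp [abs_of_nonneg, hε])

lemma germ_right {f : Equiv.Perm ℝ} (hf : PLHomeo f) {β : ℝ} (hβ : f β = β) :
    ∃ δ > 0, ∃ s > 0, ∀ x ∈ Ioo β (β + δ), f x = β + s * (x - β) := by
  obtain ⟨hh, hpl⟩ := hf
  -- find a right window avoiding the non-affine set
  obtain ⟨δ₀, hδ₀, hwin⟩ : ∃ δ₀ > 0, ∀ x ∈ Ioo β (β + δ₀), LocallyAffineAt ⇑f x := by
    set E := {x | ¬ LocallyAffineAt ⇑f x} ∩ Ioi β with hE
    by_cases hne : E.Nonempty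
    · have hEfin : E.Finite := hpl.subset inter_subset_left
      have hmem := hne.csInf_mem hEfin
      have hβlt : β < sInf E := hmem.2
      refine ⟨sInf E - β, by linarith, fun x hx => ?_⟩
      by_contra hna
      have hxE : x ∈ E := ⟨hna, hx.1⟩
      have := csInf_le hEfin.bddBelow hxE
      have := hx.2
      linarith
    · refine ⟨1, one_pos, fun x hx => ?_⟩
      by_contra hna
      exact hne ⟨x, hna, hx.1⟩
  obtain ⟨m, c, hmc⟩ := affine_on_Ioo (by linarith : β < β + δ₀) hwin
  -- continuity at β gives c = β - m * β
  have hlim : f β = m * β + c := by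
    have T1 : Filter.Tendsto (⇑f) (nhdsWithin β (Ioi β)) (nhds (f β)) :=
      ((cont hh).tendsto β).mono_left nhdsWithin_le_nhds
    have T2 : Filter.Tendsto (fun x => m * x + c) (nhdsWithin β (Ioi β)) (nhds (m * β + c)) := by
      apply Filter.Tendsto.mono_left _ nhdsWithin_le_nhds
      exact (((continuous_const.mul continuous_id).add continuous_const).tendsto β)
    have heq : ∀ᶠ x in nhdsWithin β (Ioi β), f x = m * x + c := by
      filter_upwards [Ioo_mem_nhdsGT_of_mem (show β ∈ Ico β (β + δ₀) from ⟨le_refl _, by linarith⟩)]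
        with x hx
      exact hmc x hx
    exact tendsto_nhds_unique (T1.congr' heq) T2
  rw [hβ] at hlim
  have hform : ∀ x ∈ Ioo β (β + δ₀), f x = β + m * (x - β) := by
    intro x hx
    rw [hmc x hx]
    have : c = β - m * β := by linarith
    rw [this]; ring
  have hmpos : 0 < m := by
    have hx₁ : β + δ₀/2 ∈ Ioo β (β + δ₀) := ⟨by linarith, by linarith⟩
    have h1 : f (β + δ₀/2) > β := by
      have := hh.1 (show β < β + δ₀/2 by linarith)
      rw [hβ] at this; exact this
    rw [hform _ hx₁] at h1
    have : m * (δ₀/2) > 0 := by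
      have h2 : β + δ₀/2 - β = δ₀/2 := by ring
      rw [h2] at h1; linarith
    by_contra hc
    push_neg at hc
    nlinarith
  exact ⟨δ₀, hδ₀, m, hmpos, hform⟩

lemma germ_left {f : Equiv.Perm ℝ} (hf : PLHomeo f) {β : ℝ} (hβ : f β = β) :
    ∃ δ > 0, ∃ s > 0, ∀ x ∈ Ioo (β - δ) β, f x = β + s * (x - β) := by
  obtain ⟨hh, hpl⟩ := hf
  obtain ⟨δ₀, hδ₀, hwin⟩ : ∃ δ₀ > 0, ∀ x ∈ Ioo (β - δ₀) β, LocallyAffineAt ⇑f x := by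
    set E := {x | ¬ LocallyAffineAt ⇑f x} ∩ Iio β with hE
    by_cases hne : E.Nonempty
    · have hEfin : E.Finite := hpl.subset inter_subset_left
      have hmem := hne.csSup_mem hEfin
      have hβlt : sSup E < β := hmem.2
      refine ⟨β - sSup E, by linarith, fun x hx => ?_⟩
      by_contra hna
      have hxE : x ∈ E := ⟨hna, hx.2⟩
      have := le_csSup hEfin.bddAbove hxE
      have := hx.1
      linarith
    · refine ⟨1, one_pos, fun x hx => ?_⟩
      by_contra hna
      exact hne ⟨x, hna, hx.2⟩
  obtain ⟨m, c, hmc⟩ := affine_on_Ioo (by linarith : β - δ₀ < β) hwin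
  have hlim : f β = m * β + c := by
    have T1 : Filter.Tendsto (⇑f) (nhdsWithin β (Iio β)) (nhds (f β)) :=
      ((cont hh).tendsto β).mono_left nhdsWithin_le_nhds
    have T2 : Filter.Tendsto (fun x => m * x + c) (nhdsWithin β (Iio β)) (nhds (m * β + c)) := by
      apply Filter.Tendsto.mono_left _ nhdsWithin_le_nhds
      exact (((continuous_const.mul continuous_id).add continuous_const).tendsto β)
    have heq : ∀ᶠ x in nhdsWithin β (Iio β), f x = m * x + c := by
      filter_upwards [Ioo_mem_nhdsLT_of_mem (show β ∈ Ioc (β - δ₀) β from ⟨by linarith, le_refl _⟩)]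
        with x hx
      exact hmc x hx
    exact tendsto_nhds_unique (T1.congr' heq) T2
  rw [hβ] at hlim
  have hform : ∀ x ∈ Ioo (β - δ₀) β, f x = β + m * (x - β) := by
    intro x hx
    rw [hmc x hx]
    have : c = β - m * β := by linarith
    rw [this]; ring
  have hmpos : 0 < m := by
    have hx₁ : β - δ₀/2 ∈ Ioo (β - δ₀) β := ⟨by linarith, by linarith⟩
    have h1 : f (β - δ₀/2) < β := by
      have := hh.1 (show β - δ₀/2 < β by linarith)
      rw [hβ] at this; exact this
    rw [hform _ hx₁] at h1
    have : m * (β - δ₀/2 - β) < 0 := by linarith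
    by_contra hc
    push_neg at hc
    nlinarith
  exact ⟨δ₀, hδ₀, m, hmpos, hform⟩

end PLdepth4

namespace PLdepth5
open PLdepth PLdepth2 PLdepth3 PLdepth4

variable {a b : Equiv.Perm ℝ} {β : ℝ}

lemma inv_strictMono (ha : Homeo01 a) : StrictMono ⇑a⁻¹ := (homeo_inv ha).1

lemma inv_lt_iff (ha : Homeo01 a) {x y : ℝ} : a⁻¹ x < y ↔ x < a y := by
  constructor
  · intro h
    have := ha.1 h
    rwa [a.apply_inv_self] at this
  · intro h
    have := (homeo_inv ha).1 h
    rwa [a.inv_apply_self] at this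

lemma lt_inv_iff (ha : Homeo01 a) {x y : ℝ} : x < a⁻¹ y ↔ a x < y := by
  constructor
  · intro h
    have := ha.1 h
    rwa [a.apply_inv_self] at this
  · intro h
    have := (homeo_inv ha).1 h
    rwa [a.inv_apply_self] at this

lemma comm_id_near_right (ha : PLHomeo a) (hb : PLHomeo b)
    (haβ : a β = β) (hbβ : b β = β) :
    ∃ δ > 0, ∀ x ∈ Ioo β (β + δ), (a * b * a⁻¹ * b⁻¹) x = x := by
  obtain ⟨δ₁, hδ₁, s, hs, Ha⟩ := germ_right ha haβ
  obtain ⟨δ₂, hδ₂, t, ht, Hb⟩ := germ_right hb hbβ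
  set w : ℝ := min (min δ₂ (δ₁/t)) (min δ₁ (δ₂/s)) with hw
  have hwpos : 0 < w := by
    apply lt_min (lt_min hδ₂ (by positivity)) (lt_min hδ₁ (by positivity))
  have hab : ∀ x ∈ Ioo β (β + w), a (b x) = β + s*(t*(x-β)) := by
    intro x hx
    have hx2 : x ∈ Ioo β (β + δ₂) := by
      refine ⟨hx.1, lt_of_lt_of_le hx.2 ?_⟩
      have : w ≤ δ₂ := le_trans (min_le_left _ _) (min_le_left _ _)
      linarith
    have hbx : b x = β + t*(x-β) := Hb x hx2
    have hbx2 : b x ∈ Ioo β (β + δ₁) := by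
      rw [hbx]
      constructor
      · have : 0 < t*(x-β) := mul_pos ht (by linarith [hx.1])
        linarith
      · have h1 : x - β < δ₁/t := by
          have h2 : w ≤ δ₁/t := le_trans (min_le_left _ _) (min_le_right _ _)
          have := hx.2; linarith
        have h3 : t*(x-β) < δ₁ := by
          rw [show δ₁ = t * (δ₁/t) by field_simp]
          exact (mul_lt_mul_iff_right₀ ht).2 h1
        linarith
    have := Ha _ hbx2
    rw [this, hbx]
    ring_nf
  have hba : ∀ x ∈ Ioo β (β + w), b (a x) = β + t*(s*(x-β)) := by
    intro x hx
    have hx2 : x ∈ Ioo β (β + δ₁) := by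
      refine ⟨hx.1, lt_of_lt_of_le hx.2 ?_⟩
      have : w ≤ δ₁ := le_trans (min_le_right _ _) (min_le_left _ _)
      linarith
    have hax : a x = β + s*(x-β) := Ha x hx2
    have hax2 : a x ∈ Ioo β (β + δ₂) := by
      rw [hax]
      constructor
      · have : 0 < s*(x-β) := mul_pos hs (by linarith [hx.1])
        linarith
      · have h1 : x - β < δ₂/s := by
          have h2 : w ≤ δ₂/s := le_trans (min_le_right _ _) (min_le_right _ _)
          have := hx.2; linarith
        have h3 : s*(x-β) < δ₂ := by
          rw [show δ₂ = s * (δ₂/s) by field_simp]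
          exact (mul_lt_mul_iff_right₀ hs).2 h1
        linarith
    have := Hb _ hax2
    rw [this, hax]
    ring_nf
  set q : ℝ := b (a (β + w)) with hq
  have hqβ : β < q := by
    have h1 : β < a (β + w) := by
      have := ha.1.1 (show β < β + w by linarith)
      rwa [haβ] at this
    have := hb.1.1 h1
    rwa [hbβ] at this
  refine ⟨q - β, by linarith, fun x hx => ?_⟩
  have hxq : x ∈ Ioo β q := ⟨hx.1, by have := hx.2; linarith⟩
  set y : ℝ := a⁻¹ (b⁻¹ x) with hy
  have hyw : y ∈ Ioo β (β + w) := by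
    constructor
    · rw [hy]
      rw [lt_inv_iff ha.1, haβ, lt_inv_iff hb.1, hbβ]
      exact hxq.1
    · rw [hy]
      rw [inv_lt_iff ha.1, inv_lt_iff hb.1]
      exact hxq.2
  have key1 : a (b y) = β + s*(t*(y-β)) := hab y hyw
  have key2 : b (a y) = β + t*(s*(y-β)) := hba y hyw
  have hbay : b (a y) = x := by
    rw [hy]
    rw [a.apply_inv_self, b.apply_inv_self]
  show a (b (a⁻¹ (b⁻¹ x))) = x
  rw [← hy, key1, ← hbay, key2]
  ring_nf

lemma comm_id_near_left (ha : PLHomeo a) (hb : PLHomeo b)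
    (haβ : a β = β) (hbβ : b β = β) :
    ∃ δ > 0, ∀ x ∈ Ioo (β - δ) β, (a * b * a⁻¹ * b⁻¹) x = x := by
  obtain ⟨δ₁, hδ₁, s, hs, Ha⟩ := germ_left ha haβ
  obtain ⟨δ₂, hδ₂, t, ht, Hb⟩ := germ_left hb hbβ
  set w : ℝ := min (min δ₂ (δ₁/t)) (min δ₁ (δ₂/s)) with hw
  have hwpos : 0 < w := by
    apply lt_min (lt_min hδ₂ (by positivity)) (lt_min hδ₁ (by positivity))
  have hab : ∀ x ∈ Ioo (β - w) β, a (b x) = β + s*(t*(x-β)) := by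
    intro x hx
    have hx2 : x ∈ Ioo (β - δ₂) β := by
      refine ⟨lt_of_le_of_lt ?_ hx.1, hx.2⟩
      have : w ≤ δ₂ := le_trans (min_le_left _ _) (min_le_left _ _)
      linarith
    have hbx : b x = β + t*(x-β) := Hb x hx2
    have hbx2 : b x ∈ Ioo (β - δ₁) β := by
      rw [hbx]
      constructor
      · have h1 : β - x < δ₁/t := by
          have h2 : w ≤ δ₁/t := le_trans (min_le_left _ _) (min_le_right _ _)
          have := hx.1; linarith
        have h3 : t*(β-x) < δ₁ := by
          rw [show δ₁ = t * (δ₁/t) by field_simp]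
          exact (mul_lt_mul_iff_right₀ ht).2 h1
        have : t*(x-β) = -(t*(β-x)) := by ring
        linarith
      · have : 0 < t*(β-x) := mul_pos ht (by linarith [hx.2])
        have h4 : t*(x-β) = -(t*(β-x)) := by ring
        linarith
    have := Ha _ hbx2
    rw [this, hbx]
    ring_nf
  have hba : ∀ x ∈ Ioo (β - w) β, b (a x) = β + t*(s*(x-β)) := by
    intro x hx
    have hx2 : x ∈ Ioo (β - δ₁) β := by
      refine ⟨lt_of_le_of_lt ?_ hx.1, hx.2⟩
      have : w ≤ δ₁ := le_trans (min_le_right _ _) (min_le_left _ _)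
      linarith
    have hax : a x = β + s*(x-β) := Ha x hx2
    have hax2 : a x ∈ Ioo (β - δ₂) β := by
      rw [hax]
      constructor
      · have h1 : β - x < δ₂/s := by
          have h2 : w ≤ δ₂/s := le_trans (min_le_right _ _) (min_le_right _ _)
          have := hx.1; linarith
        have h3 : s*(β-x) < δ₂ := by
          rw [show δ₂ = s * (δ₂/s) by field_simp]
          exact (mul_lt_mul_iff_right₀ hs).2 h1
        have : s*(x-β) = -(s*(β-x)) := by ring
        linarith
      · have : 0 < s*(β-x) := mul_pos hs (by linarith [hx.2])
        have h4 : s*(x-β) = -(s*(β-x)) := by ring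
        linarith
    have := Hb _ hax2
    rw [this, hax]
    ring_nf
  set q : ℝ := b (a (β - w)) with hq
  have hqβ : q < β := by
    have h1 : a (β - w) < β := by
      have := ha.1.1 (show β - w < β by linarith)
      rwa [haβ] at this
    have := hb.1.1 h1
    rwa [hbβ] at this
  refine ⟨β - q, by linarith, fun x hx => ?_⟩
  have hxq : x ∈ Ioo q β := ⟨by have := hx.1; linarith, hx.2⟩
  set y : ℝ := a⁻¹ (b⁻¹ x) with hy
  have hyw : y ∈ Ioo (β - w) β := by
    constructor
    · rw [hy]
      rw [lt_inv_iff ha.1, lt_inv_iff hb.1]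
      exact hxq.1
    · rw [hy]
      rw [inv_lt_iff ha.1, haβ, inv_lt_iff hb.1, hbβ]
      exact hxq.2
  have key1 : a (b y) = β + s*(t*(y-β)) := hab y hyw
  have key2 : b (a y) = β + t*(s*(y-β)) := hba y hyw
  have hbay : b (a y) = x := by
    rw [hy, a.apply_inv_self, b.apply_inv_self]
  show a (b (a⁻¹ (b⁻¹ x))) = x
  rw [← hy, key1, ← hbay, key2]
  ring_nf

end PLdepth5

namespace PLdepth6
open PLdepth PLdepth2 PLdepth3 PLdepth4 PLdepth5

variable {G : Subgroup (Equiv.Perm ℝ)} {a b φ g h : Equiv.Perm ℝ} {A B X Y : Set ℝ} {n : ℕ}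

lemma orbital_eq_of_mem {f : ℝ → ℝ} (hA : IsOrbital f A) (hB : IsOrbital f B) {x : ℝ}
    (hxA : x ∈ A) (hxB : x ∈ B) : A = B := by
  obtain ⟨xa, _, rfl⟩ := hA
  obtain ⟨xb, _, rfl⟩ := hB
  exact (connectedComponentIn_eq hxA).trans (connectedComponentIn_eq hxB).symm

lemma finite_orbitals (hg : PLHomeo g) : {A : Set ℝ | IsOrbital ⇑g A}.Finite := by
  set E := {x | ¬ LocallyAffineAt ⇑g x} with hE
  have hEfin : E.Finite := hg.2
  have hmeets : ∀ A ∈ {A : Set ℝ | IsOrbital ⇑g A}, (A ∩ E).Nonempty := by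
    intro A hA
    by_contra hc
    rw [not_nonempty_iff_eq_empty] at hc
    have hrep := orbital_eq_Ioo hg.1 hA
    have hlt := orbital_inf_lt_sup hg.1 hA
    have hwin : ∀ x ∈ Ioo (sInf A) (sSup A), LocallyAffineAt ⇑g x := by
      intro x hx
      by_contra hna
      have : x ∈ A ∩ E := ⟨hrep ▸ hx, hna⟩
      rw [hc] at this
      exact this
    obtain ⟨m, c, hmc⟩ := affine_on_Ioo hlt hwin
    -- endpoints are fixed and g is continuous, so m = 1, c = 0 on the interval
    have hfi : g (sInf A) = sInf A := orbital_fix_inf hg.1 hA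
    have hfs : g (sSup A) = sSup A := orbital_fix_sup hg.1 hA
    have hlim1 : g (sInf A) = m * (sInf A) + c := by
      have T1 : Filter.Tendsto (⇑g) (nhdsWithin (sInf A) (Ioi (sInf A))) (nhds (g (sInf A))) :=
        ((cont hg.1).tendsto _).mono_left nhdsWithin_le_nhds
      have T2 : Filter.Tendsto (fun x => m * x + c) (nhdsWithin (sInf A) (Ioi (sInf A)))
          (nhds (m * (sInf A) + c)) :=
        (((continuous_const.mul continuous_id).add continuous_const).tendsto _).mono_left
          nhdsWithin_le_nhds
      have heq : ∀ᶠ x in nhdsWithin (sInf A) (Ioi (sInf A)), g x = m * x + c := by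
        filter_upwards [Ioo_mem_nhdsGT_of_mem
          (show sInf A ∈ Ico (sInf A) (sSup A) from ⟨le_refl _, hlt⟩)] with x hx
        exact hmc x hx
      exact tendsto_nhds_unique (T1.congr' heq) T2
    have hlim2 : g (sSup A) = m * (sSup A) + c := by
      have T1 : Filter.Tendsto (⇑g) (nhdsWithin (sSup A) (Iio (sSup A))) (nhds (g (sSup A))) :=
        ((cont hg.1).tendsto _).mono_left nhdsWithin_le_nhds
      have T2 : Filter.Tendsto (fun x => m * x + c) (nhdsWithin (sSup A) (Iio (sSup A)))
          (nhds (m * (sSup A) + c)) :=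
        (((continuous_const.mul continuous_id).add continuous_const).tendsto _).mono_left
          nhdsWithin_le_nhds
      have heq : ∀ᶠ x in nhdsWithin (sSup A) (Iio (sSup A)), g x = m * x + c := by
        filter_upwards [Ioo_mem_nhdsLT_of_mem
          (show sSup A ∈ Ioc (sInf A) (sSup A) from ⟨hlt, le_refl _⟩)] with x hx
        exact hmc x hx
      exact tendsto_nhds_unique (T1.congr' heq) T2
    rw [hfi] at hlim1
    rw [hfs] at hlim2
    have hm1 : m = 1 := by nlinarith
    have hc0 : c = 0 := by rw [hm1] at hlim1; linarith
    obtain ⟨z, hz⟩ := orbital_nonempty hA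
    have : g z = z := by
      rw [hmc z (hrep ▸ hz), hm1, hc0]; ring
    exact (mem_supp_iff.1 (orbital_subset hA hz)) this
  classical
  set F : Set ℝ → ℝ := fun A => if hne : (A ∩ E).Nonempty then hne.choose else 0 with hF
  apply Set.Finite.of_finite_image (f := F)
  · apply hEfin.subset
    rintro _ ⟨A, hA, rfl⟩
    have hne := hmeets A hA
    simp only [hF, dif_pos hne]
    exact hne.choose_spec.2
  · intro A hA B hB hFAB
    have hneA := hmeets A hA
    have hneB := hmeets B hB
    have hmemA : F A ∈ A := by simp only [hF, dif_pos hneA]; exact hneA.choose_spec.1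
    have hmemB : F B ∈ B := by simp only [hF, dif_pos hneB]; exact hneB.choose_spec.1
    exact orbital_eq_of_mem hA hB (hFAB ▸ hmemA) hmemB

lemma master (hG : ∀ g ∈ G, PLHomeo g)
    (Hmax : ∀ T, IsTower G T → T.Finite ∧ T.ncard ≤ n)
    (haG : a ∈ G) (hφG : φ ∈ G) (hX : IsOrbital ⇑a X)
    (hsub : ⇑φ '' X ⊆ X) (hne : ⇑φ '' X ≠ X) : False := by
  have hφh : Homeo01 φ := (hG φ hφG).1
  set Ak : ℕ → Set ℝ := fun k => ⇑(φ ^ k) '' X with hAk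
  have hsucc : ∀ k, Ak (k+1) ⊂ Ak k := by
    intro k
    have hfun : ⇑(φ ^ (k+1)) = ⇑(φ ^ k) ∘ ⇑φ := by
      funext x
      show (φ ^ (k+1)) x = (φ ^ k) (φ x)
      rw [pow_succ, mul_apply]
    have h1 : ⇑(φ ^ (k+1)) '' X = ⇑(φ ^ k) '' (⇑φ '' X) := by
      rw [hfun, image_comp]
    rw [ssubset_iff_subset_ne]
    constructor
    · show ⇑(φ ^ (k+1)) '' X ⊆ ⇑(φ ^ k) '' X
      rw [h1]
      exact image_mono hsub
    · show ⇑(φ ^ (k+1)) '' X ≠ ⇑(φ ^ k) '' X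
      rw [h1]
      intro hc
      apply hne
      exact Set.image_injective.2 (φ ^ k).injective hc
  have hanti : StrictAnti Ak := strictAnti_nat_of_succ_lt hsucc
  set T : Set (Set ℝ × Equiv.Perm ℝ) :=
    (fun k : Fin (n+1) => (Ak k, φ ^ (k:ℕ) * a * (φ ^ (k:ℕ))⁻¹)) '' univ with hT
  have hmemG : ∀ k : ℕ, φ ^ k * a * (φ ^ k)⁻¹ ∈ G :=
    fun k => mul_mem (mul_mem (pow_mem hφG k) haG) (inv_mem (pow_mem hφG k))
  have horb : ∀ k : ℕ, IsOrbital ⇑(φ ^ k * a * (φ ^ k)⁻¹) (Ak k) :=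
    fun k => orbital_conj (homeo_pow hφh k) hX
  have htower : IsTower G T := by
    refine ⟨?_, ?_, ?_⟩
    · rintro p ⟨k, -, rfl⟩
      exact ⟨hmemG k, horb k⟩
    · rintro p ⟨k, -, rfl⟩ q ⟨l, -, rfl⟩
      rcases le_total (k:ℕ) (l:ℕ) with hkl | hkl
      · exact Or.inr (hanti.antitone hkl)
      · exact Or.inl (hanti.antitone hkl)
    · rintro p ⟨k, -, rfl⟩ q ⟨l, -, rfl⟩ heq
      simp only at heq ⊢
      have : (k:ℕ) = (l:ℕ) := hanti.injective (by exact heq)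
      have : k = l := Fin.ext this
      rw [this]
  have hcard : T.ncard = n + 1 := by
    rw [hT, Set.ncard_image_of_injective _ ?_, Set.ncard_univ]
    · simp
    · intro k l hkl
      simp only [Prod.mk.injEq] at hkl
      exact Fin.ext (hanti.injective hkl.1)
  have := (Hmax T htower).2
  rw [hcard] at this
  omega

end PLdepth6

namespace PLdepth7
open PLdepth PLdepth2 PLdepth3 PLdepth4 PLdepth5 PLdepth6

variable {G : Subgroup (Equiv.Perm ℝ)} {a b φ g h : Equiv.Perm ℝ} {A B X Y : Set ℝ} {n : ℕ}

lemma master_left (hG : ∀ g ∈ G, PLHomeo g)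
    (Hmax : ∀ T, IsTower G T → T.Finite ∧ T.ncard ≤ n)
    (haG : a ∈ G) (hφG : φ ∈ G) (hX : IsOrbital ⇑a X)
    (hfix : φ (sInf X) = sInf X) (hlt : φ (sSup X) < sSup X) : False := by
  have ha := (hG a haG).1
  have hφ := (hG φ hφG).1
  have hrep := orbital_eq_Ioo ha hX
  have hIS := orbital_inf_lt_sup ha hX
  have him : ⇑φ '' X = Ioo (sInf X) (φ (sSup X)) := by
    conv_lhs => rw [hrep]
    rw [image_Ioo hφ, hfix]
  have hisl : sInf X < φ (sSup X) := by
    have := hφ.1 hIS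
    rwa [hfix] at this
  apply master hG Hmax haG hφG hX
  · rw [him]
    conv_rhs => rw [hrep]
    exact Ioo_subset_Ioo_right hlt.le
  · intro hc
    have := congrArg sSup hc
    rw [him, csSup_Ioo hisl] at this
    conv_rhs at this => rw [hrep]
    rw [csSup_Ioo hIS] at this
    exact absurd this (ne_of_lt hlt)

lemma master_right (hG : ∀ g ∈ G, PLHomeo g)
    (Hmax : ∀ T, IsTower G T → T.Finite ∧ T.ncard ≤ n)
    (haG : a ∈ G) (hφG : φ ∈ G) (hX : IsOrbital ⇑a X)
    (hfix : φ (sSup X) = sSup X) (hlt : sInf X < φ (sInf X)) : False := by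
  have ha := (hG a haG).1
  have hφ := (hG φ hφG).1
  have hrep := orbital_eq_Ioo ha hX
  have hIS := orbital_inf_lt_sup ha hX
  have him : ⇑φ '' X = Ioo (φ (sInf X)) (sSup X) := by
    conv_lhs => rw [hrep]
    rw [image_Ioo hφ, hfix]
  have hisl : φ (sInf X) < sSup X := by
    have := hφ.1 hIS
    rwa [hfix] at this
  apply master hG Hmax haG hφG hX
  · rw [him]
    conv_rhs => rw [hrep]
    exact Ioo_subset_Ioo_left hlt.le
  · intro hc
    have := congrArg sInf hc
    rw [him, csInf_Ioo hisl] at this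
    conv_rhs at this => rw [hrep]
    rw [csInf_Ioo hIS] at this
    exact absurd this.symm (ne_of_lt hlt)

lemma endpoint_contra (hG : ∀ g ∈ G, PLHomeo g)
    (Hmax : ∀ T, IsTower G T → T.Finite ∧ T.ncard ≤ n)
    (haG : a ∈ G) (hφG : φ ∈ G) (hX : IsOrbital ⇑a X)
    (hcase : (φ (sInf X) = sInf X ∧ φ (sSup X) ≠ sSup X) ∨
      (φ (sSup X) = sSup X ∧ φ (sInf X) ≠ sInf X)) : False := by
  have hφ := (hG φ hφG).1
  rcases hcase with ⟨hfix, hmov⟩ | ⟨hfix, hmov⟩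
  · rcases lt_or_gt_of_ne hmov with hlt | hgt
    · exact master_left hG Hmax haG hφG hX hfix hlt
    · apply master_left hG Hmax haG (inv_mem hφG) hX
      · rw [fix_iff_inv_fix]; exact hfix
      · rw [inv_lt_iff hφ]; exact hgt
  · rcases lt_or_gt_of_ne hmov with hlt | hgt
    · apply master_right hG Hmax haG (inv_mem hφG) hX
      · rw [fix_iff_inv_fix]; exact hfix
      · rw [lt_inv_iff hφ]; exact hlt
    · exact master_right hG Hmax haG hφG hX hfix hgt

lemma orbital_disjoint {f : ℝ → ℝ} (hA : IsOrbital f A) (hB : IsOrbital f B) (hne : A ≠ B) :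
    A ∩ B = ∅ := by
  by_contra hc
  obtain ⟨z, hz1, hz2⟩ := nonempty_iff_ne_empty.2 hc
  exact hne (orbital_eq_of_mem hA hB hz1 hz2)

lemma descent_step (hG : ∀ g ∈ G, PLHomeo g)
    (Hmax : ∀ T, IsTower G T → T.Finite ∧ T.ncard ≤ n)
    (haG : a ∈ G) (hbG : b ∈ G) (hX : IsOrbital ⇑a X) (hY : IsOrbital ⇑b Y)
    (h1 : sInf X < sInf Y) (h2 : sInf Y < sSup X) (h3 : sSup X < sSup Y) :
    ∃ X' m : Set ℝ, IsOrbital ⇑a X' ∧ IsOrbital ⇑b m ∧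
      sInf X' < sInf m ∧ sInf m < sSup X' ∧ sSup X' < sSup m ∧ sInf m < sInf X := by
  have ha := (hG a haG).1
  have hb := (hG b hbG).1
  have hrepX := orbital_eq_Ioo ha hX
  have hrepY := orbital_eq_Ioo hb hY
  have hbx₂ : b (sSup X) ≠ sSup X := by
    have hmem : sSup X ∈ Y := by rw [hrepY]; exact ⟨h2, h3⟩
    exact mem_supp_iff.1 (orbital_subset hY hmem)
  by_cases hbx₁ : b (sInf X) = sInf X
  · exact absurd (Or.inl ⟨hbx₁, hbx₂⟩) fun hc => endpoint_contra hG Hmax haG hbG hX hc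
  · have hx₁supp : sInf X ∈ Supp ⇑b := hbx₁
    set m := connectedComponentIn (Supp ⇑b) (sInf X) with hmdef
    have hm : IsOrbital ⇑b m := ⟨_, hx₁supp, rfl⟩
    have hx₁m : sInf X ∈ m := mem_connectedComponentIn hx₁supp
    have hrepm := orbital_eq_Ioo hb hm
    have hx₁m' : sInf m < sInf X ∧ sInf X < sSup m := by
      have := hx₁m; rw [hrepm] at this; exact ⟨this.1, this.2⟩
    have hmY : m ≠ Y := by
      intro hc
      rw [hc, hrepY] at hx₁m
      exact absurd hx₁m.1 (not_lt.2 h1.le)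
    have hdisj := orbital_disjoint hm hY hmY
    have hm₂ : sSup m ≤ sInf Y := by
      by_contra hc
      push_neg at hc
      set z := (sInf Y + min (sSup m) (sSup Y))/2 with hz
      have hzY : sInf Y < z ∧ z < min (sSup m) (sSup Y) := by
        constructor
        · rw [hz]; rcases lt_min_iff.2 ⟨hc, orbital_inf_lt_sup hb hY⟩ with q; linarith [lt_min_iff.2 ⟨hc, orbital_inf_lt_sup hb hY⟩]
        · rw [hz]; linarith [lt_min_iff.2 ⟨hc, orbital_inf_lt_sup hb hY⟩]
      have hzm : z ∈ m := by
        rw [hrepm]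
        refine ⟨?_, lt_of_lt_of_le hzY.2 (min_le_left _ _)⟩
        calc sInf m < sInf X := hx₁m'.1
        _ < sInf Y := h1
        _ < z := hzY.1
      have hzY2 : z ∈ Y := by
        rw [hrepY]
        exact ⟨hzY.1, lt_of_lt_of_le hzY.2 (min_le_right _ _)⟩
      have : z ∈ m ∩ Y := ⟨hzm, hzY2⟩
      rw [hdisj] at this
      exact this
    have haSupm : a (sSup m) ≠ sSup m := by
      have hmem : sSup m ∈ X := by
        rw [hrepX]
        exact ⟨hx₁m'.2, lt_of_le_of_lt hm₂ h2⟩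
      exact mem_supp_iff.1 (orbital_subset hX hmem)
    by_cases ham₁ : a (sInf m) = sInf m
    · exact absurd (Or.inl ⟨ham₁, haSupm⟩) fun hc => endpoint_contra hG Hmax hbG haG hm hc
    · have hm₁supp : sInf m ∈ Supp ⇑a := ham₁
      set X' := connectedComponentIn (Supp ⇑a) (sInf m) with hX'def
      have hX' : IsOrbital ⇑a X' := ⟨_, hm₁supp, rfl⟩
      have hmX' : sInf m ∈ X' := mem_connectedComponentIn hm₁supp
      have hrepX' := orbital_eq_Ioo ha hX'
      have hmX'' : sInf X' < sInf m ∧ sInf m < sSup X' := by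
        have := hmX'; rw [hrepX'] at this; exact ⟨this.1, this.2⟩
      have hX'X : X' ≠ X := by
        intro hc
        rw [hc, hrepX] at hmX'
        exact absurd hmX'.1 (not_lt.2 hx₁m'.1.le)
      have hdisj2 := orbital_disjoint hX' hX hX'X
      have hsupX' : sSup X' ≤ sInf X := by
        by_contra hc
        push_neg at hc
        set z := (sInf X + min (sSup X') (sSup X))/2 with hz
        have hzlt : sInf X < z ∧ z < min (sSup X') (sSup X) := by
          have hq := lt_min_iff.2 ⟨hc, orbital_inf_lt_sup ha hX⟩
          constructor
          · rw [hz]; linarith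
          · rw [hz]; linarith
        have hzX' : z ∈ X' := by
          rw [hrepX']
          refine ⟨?_, lt_of_lt_of_le hzlt.2 (min_le_left _ _)⟩
          calc sInf X' < sInf m := hmX''.1
          _ < sInf X := hx₁m'.1
          _ < z := hzlt.1
        have hzX : z ∈ X := by
          rw [hrepX]
          exact ⟨hzlt.1, lt_of_lt_of_le hzlt.2 (min_le_right _ _)⟩
        have : z ∈ X' ∩ X := ⟨hzX', hzX⟩
        rw [hdisj2] at this
        exact this
      exact ⟨X', m, hX', hm, hmX''.1, hmX''.2,
        lt_of_le_of_lt hsupX' hx₁m'.2, hx₁m'.1⟩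

lemma no_transversal_aux (hG : ∀ g ∈ G, PLHomeo g)
    (Hmax : ∀ T, IsTower G T → T.Finite ∧ T.ncard ≤ n) (N : ℕ) :
    ∀ (a b : Equiv.Perm ℝ) (X Y : Set ℝ), a ∈ G → b ∈ G →
      IsOrbital ⇑a X → IsOrbital ⇑b Y →
      sInf X < sInf Y → sInf Y < sSup X → sSup X < sSup Y →
      {E : Set ℝ | (IsOrbital ⇑a E ∨ IsOrbital ⇑b E) ∧ sInf E < sInf X}.ncard ≤ N → False := by
  induction N with
  | zero =>
    intro a b X Y haG hbG hX hY h1 h2 h3 hcard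
    obtain ⟨X', m, hX', hm, g1, g2, g3, g4⟩ :=
      descent_step hG Hmax haG hbG hX hY h1 h2 h3
    have hfinO : {E : Set ℝ | (IsOrbital ⇑a E ∨ IsOrbital ⇑b E) ∧ sInf E < sInf X}.Finite := by
      apply ((finite_orbitals (hG a haG)).union (finite_orbitals (hG b hbG))).subset
      rintro E ⟨hE, -⟩
      exact hE
    have hmem : m ∈ {E : Set ℝ | (IsOrbital ⇑a E ∨ IsOrbital ⇑b E) ∧ sInf E < sInf X} :=
      ⟨Or.inr hm, g4⟩
    have := Set.ncard_pos hfinO |>.2 ⟨m, hmem⟩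
    omega
  | succ N ih =>
    intro a b X Y haG hbG hX hY h1 h2 h3 hcard
    obtain ⟨X', m, hX', hm, g1, g2, g3, g4⟩ :=
      descent_step hG Hmax haG hbG hX hY h1 h2 h3
    set O := {E : Set ℝ | (IsOrbital ⇑a E ∨ IsOrbital ⇑b E) ∧ sInf E < sInf X} with hO
    set O' := {E : Set ℝ | (IsOrbital ⇑a E ∨ IsOrbital ⇑b E) ∧ sInf E < sInf X'} with hO'
    have hfinO : O.Finite := by
      apply ((finite_orbitals (hG a haG)).union (finite_orbitals (hG b hbG))).subset
      rintro E ⟨hE, -⟩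
      exact hE
    have hsub : O' ⊆ O \ {m} := by
      rintro E ⟨hE, hElt⟩
      refine ⟨⟨hE, ?_⟩, ?_⟩
      · calc sInf E < sInf X' := hElt
        _ < sInf m := g1
        _ < sInf X := g4
      · intro hc
        rw [mem_singleton_iff] at hc
        rw [hc] at hElt
        exact absurd hElt (not_lt.2 g1.le)
    have hmemm : m ∈ O := ⟨Or.inr hm, g4⟩
    have hcard' : O'.ncard ≤ N := by
      have e1 : O'.ncard ≤ (O \ {m}).ncard :=
        Set.ncard_le_ncard hsub (hfinO.subset diff_subset)
      have e2 : (O \ {m}).ncard = O.ncard - 1 := Set.ncard_diff_singleton_of_mem hmemm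
      omega
    exact ih a b X' m haG hbG hX' hm g1 g2 g3 hcard'

lemma no_transversal (hG : ∀ g ∈ G, PLHomeo g)
    (Hmax : ∀ T, IsTower G T → T.Finite ∧ T.ncard ≤ n)
    (haG : a ∈ G) (hbG : b ∈ G) (hX : IsOrbital ⇑a X) (hY : IsOrbital ⇑b Y)
    (h1 : sInf X < sInf Y) (h2 : sInf Y < sSup X) (h3 : sSup X < sSup Y) : False := by
  set O := {E : Set ℝ | (IsOrbital ⇑a E ∨ IsOrbital ⇑b E) ∧ sInf E < sInf X} with hO
  have hfinO : O.Finite := by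
    apply ((finite_orbitals (hG a haG)).union (finite_orbitals (hG b hbG))).subset
    rintro E ⟨hE, -⟩
    exact hE
  exact no_transversal_aux hG Hmax O.ncard a b X Y haG hbG hX hY h1 h2 h3 (le_refl _)

end PLdepth7

namespace PLdepth8
open PLdepth PLdepth2 PLdepth3 PLdepth4 PLdepth5 PLdepth6 PLdepth7

variable {G : Subgroup (Equiv.Perm ℝ)} {a b g h : Equiv.Perm ℝ} {A B E X Y : Set ℝ} {n : ℕ}

lemma orbital_inv (hA : IsOrbital ⇑h A) : IsOrbital ⇑h⁻¹ A := by
  obtain ⟨x, hx, rfl⟩ := hA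
  rw [← supp_inv (g := h)] at hx ⊢
  exact ⟨x, hx, rfl⟩

lemma nested_or_disjoint (hG : ∀ g ∈ G, PLHomeo g)
    (Hmax : ∀ T, IsTower G T → T.Finite ∧ T.ncard ≤ n)
    (haG : a ∈ G) (hbG : b ∈ G) (hE : IsOrbital ⇑a E) (hB : IsOrbital ⇑b B)
    (hov : (E ∩ B).Nonempty) (hne : E ≠ B) :
    (sInf B < sInf E ∧ sSup E < sSup B) ∨ (sInf E < sInf B ∧ sSup B < sSup E) := by
  have ha := (hG a haG).1
  have hb := (hG b hbG).1
  have hrepE := orbital_eq_Ioo ha hE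
  have hrepB := orbital_eq_Ioo hb hB
  obtain ⟨z, hzE, hzB⟩ := hov
  have hzE' : sInf E < z ∧ z < sSup E := by rw [hrepE] at hzE; exact ⟨hzE.1, hzE.2⟩
  have hzB' : sInf B < z ∧ z < sSup B := by rw [hrepB] at hzB; exact ⟨hzB.1, hzB.2⟩
  rcases lt_trichotomy (sInf E) (sInf B) with hi | hi | hi
  · rcases lt_trichotomy (sSup B) (sSup E) with hs | hs | hs
    · exact Or.inr ⟨hi, hs⟩
    · -- shared right endpoint; use φ := a on X := B
      exfalso
      apply endpoint_contra hG Hmax hbG haG hB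
      refine Or.inr ⟨?_, ?_⟩
      · rw [hs]; exact orbital_fix_sup ha hE
      · have hmem : sInf B ∈ E := by
          rw [hrepE]
          exact ⟨hi, lt_trans hzB'.1 hzE'.2⟩
        exact mem_supp_iff.1 (orbital_subset hE hmem)
    · -- transversal E left of B
      exfalso
      exact no_transversal hG Hmax haG hbG hE hB hi (lt_trans hzB'.1 hzE'.2) hs
  · -- shared left endpoint
    exfalso
    rcases lt_trichotomy (sSup E) (sSup B) with hs | hs | hs
    · apply endpoint_contra hG Hmax haG hbG hE
      refine Or.inl ⟨?_, ?_⟩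
      · rw [hi]; exact orbital_fix_inf hb hB
      · have hmem : sSup E ∈ B := by
          rw [hrepB]
          exact ⟨lt_trans hzB'.1 hzE'.2, hs⟩
        exact mem_supp_iff.1 (orbital_subset hB hmem)
    · apply hne
      rw [hrepE, hrepB, hi, hs]
    · apply endpoint_contra hG Hmax hbG haG hB
      refine Or.inl ⟨?_, ?_⟩
      · rw [← hi]; exact orbital_fix_inf ha hE
      · have hmem : sSup B ∈ E := by
          rw [hrepE]
          exact ⟨lt_trans hzE'.1 hzB'.2, hs⟩
        exact mem_supp_iff.1 (orbital_subset hE hmem)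
  · rcases lt_trichotomy (sSup E) (sSup B) with hs | hs | hs
    · exact Or.inl ⟨hi, hs⟩
    · exfalso
      apply endpoint_contra hG Hmax haG hbG hE
      refine Or.inr ⟨?_, ?_⟩
      · rw [hs]; exact orbital_fix_sup hb hB
      · have hmem : sInf E ∈ B := by
          rw [hrepB]
          exact ⟨hi, lt_trans hzE'.1 hzB'.2⟩
        exact mem_supp_iff.1 (orbital_subset hB hmem)
    · exfalso
      exact no_transversal hG Hmax hbG haG hB hE hi (lt_trans hzE'.1 hzB'.2) hs

end PLdepth8

namespace PLdepth9
open PLdepth PLdepth2 PLdepth3 PLdepth4 PLdepth5 PLdepth6 PLdepth7 PLdepth8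

variable {G : Subgroup (Equiv.Perm ℝ)} {a b g h : Equiv.Perm ℝ} {A B E X Y : Set ℝ} {n : ℕ}

lemma support_structure (hG : ∀ g ∈ G, PLHomeo g)
    (Hmax : ∀ T, IsTower G T → T.Finite ∧ T.ncard ≤ n)
    (hgG : g ∈ G) (hhG : h ∈ G) (hA : IsOrbital ⇑g A) (hB : IsOrbital ⇑h B)
    (hAB : A ⊆ B) (hne : A ≠ B) :
    (∀ E, IsOrbital ⇑g E → (E ∩ B).Nonempty → sInf B < sInf E ∧ sSup E < sSup B) ∧
    g (sInf B) = sInf B ∧ g (sSup B) = sSup B := by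
  have hg := (hG g hgG).1
  have hh := (hG h hhG).1
  have hrepB := orbital_eq_Ioo hh hB
  have hclaim : ∀ E, IsOrbital ⇑g E → (E ∩ B).Nonempty → sInf B < sInf E ∧ sSup E < sSup B := by
    intro E hE hov
    have hEB : E ≠ B := by
      intro hc
      obtain ⟨z, hz⟩ := orbital_nonempty hA
      have hzE : z ∈ E := by rw [hc]; exact hAB hz
      have : A = E := orbital_eq_of_mem hA hE hz hzE
      rw [this, hc] at hne
      exact hne rfl
    rcases nested_or_disjoint hG Hmax hgG hhG hE hB hov hEB with hcase | hcase
    · exact hcase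
    · exfalso
      obtain ⟨z, hz⟩ := orbital_nonempty hA
      have hzB : z ∈ B := hAB hz
      have hzB' : sInf B < z ∧ z < sSup B := by rw [hrepB] at hzB; exact ⟨hzB.1, hzB.2⟩
      have hzE : z ∈ E := by
        rw [orbital_eq_Ioo hg hE]
        exact ⟨lt_trans hcase.1 hzB'.1, lt_trans hzB'.2 hcase.2⟩
      have hAE : A = E := orbital_eq_of_mem hA hE hz hzE
      -- then sInf A = sInf E < sInf B, contradicting A ⊆ B
      have h1 : sInf B ≤ sInf A :=
        le_csInf (orbital_nonempty hA) fun y hy => by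
          have : y ∈ B := hAB hy
          rw [hrepB] at this
          exact this.1.le
      rw [hAE] at h1
      exact absurd h1 (not_le.2 hcase.1)
  refine ⟨hclaim, ?_, ?_⟩
  · by_contra hc
    have hsupp : sInf B ∈ Supp ⇑g := hc
    set E := connectedComponentIn (Supp ⇑g) (sInf B) with hEdef
    have hE : IsOrbital ⇑g E := ⟨_, hsupp, rfl⟩
    have hmemE : sInf B ∈ E := mem_connectedComponentIn hsupp
    have hrepE := orbital_eq_Ioo hg hE
    have hm : sInf E < sInf B ∧ sInf B < sSup E := by
      rw [hrepE] at hmemE; exact ⟨hmemE.1, hmemE.2⟩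
    have hov : (E ∩ B).Nonempty := by
      set z := (sInf B + min (sSup E) (sSup B))/2 with hz
      have hq : sInf B < min (sSup E) (sSup B) :=
        lt_min hm.2 (orbital_inf_lt_sup hh hB)
      refine ⟨z, ?_, ?_⟩
      · rw [hrepE]
        constructor
        · have : sInf E < sInf B := hm.1
          rw [hz]; linarith
        · have : z < min (sSup E) (sSup B) := by rw [hz]; linarith
          exact lt_of_lt_of_le this (min_le_left _ _)
      · rw [hrepB]
        constructor
        · rw [hz]; linarith
        · have : z < min (sSup E) (sSup B) := by rw [hz]; linarith
          exact lt_of_lt_of_le this (min_le_right _ _)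
    have := (hclaim E hE hov).1
    exact absurd this (not_lt.2 hm.1.le)
  · by_contra hc
    have hsupp : sSup B ∈ Supp ⇑g := hc
    set E := connectedComponentIn (Supp ⇑g) (sSup B) with hEdef
    have hE : IsOrbital ⇑g E := ⟨_, hsupp, rfl⟩
    have hmemE : sSup B ∈ E := mem_connectedComponentIn hsupp
    have hrepE := orbital_eq_Ioo hg hE
    have hm : sInf E < sSup B ∧ sSup B < sSup E := by
      rw [hrepE] at hmemE; exact ⟨hmemE.1, hmemE.2⟩
    have hov : (E ∩ B).Nonempty := by
      set z := (max (sInf E) (sInf B) + sSup B)/2 with hz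
      have hq : max (sInf E) (sInf B) < sSup B :=
        max_lt hm.1 (orbital_inf_lt_sup hh hB)
      refine ⟨z, ?_, ?_⟩
      · rw [hrepE]
        constructor
        · have : max (sInf E) (sInf B) < z := by rw [hz]; linarith
          exact lt_of_le_of_lt (le_max_left _ _) this
        · rw [hz]; have := hm.2; linarith
      · rw [hrepB]
        constructor
        · have : max (sInf E) (sInf B) < z := by rw [hz]; linarith
          exact lt_of_le_of_lt (le_max_right _ _) this
        · rw [hz]; linarith
    have := (hclaim E hE hov).2
    exact absurd this (not_lt.2 hm.2.le)

lemma supp_gap (hg : PLHomeo g) (hh : Homeo01 h) (hB : IsOrbital ⇑h B)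
    (hclaim : ∀ E, IsOrbital ⇑g E → (E ∩ B).Nonempty → sInf B < sInf E ∧ sSup E < sSup B) :
    ∃ μ, sInf B < μ ∧ ∀ x ∈ Ioo (sInf B) μ, x ∉ Supp ⇑g := by
  classical
  set 𝒪 := {E : Set ℝ | IsOrbital ⇑g E ∧ (E ∩ B).Nonempty} with h𝒪
  set S := (sInf '' 𝒪) with hSdef
  have hfinS : S.Finite := ((finite_orbitals hg).subset (fun E hE => hE.1)).image _
  by_cases hne : S.Nonempty
  · set μ := min (sInf S) (sSup B) with hμ
    refine ⟨μ, ?_, ?_⟩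
    · apply lt_min
      · obtain ⟨E, hE, hEeq⟩ := hne.csInf_mem hfinS
        rw [← hEeq]
        exact (hclaim E hE.1 hE.2).1
      · exact orbital_inf_lt_sup hh hB
    · intro x hx hxsupp
      set E := connectedComponentIn (Supp ⇑g) x with hEdef
      have hE : IsOrbital ⇑g E := ⟨_, hxsupp, rfl⟩
      have hxE : x ∈ E := mem_connectedComponentIn hxsupp
      have hxB : x ∈ B := by
        rw [orbital_eq_Ioo hh hB]
        exact ⟨hx.1, lt_of_lt_of_le hx.2 (min_le_right _ _)⟩
      have hE𝒪 : E ∈ 𝒪 := ⟨hE, ⟨x, hxE, hxB⟩⟩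
      have h1 : sInf S ≤ sInf E := csInf_le hfinS.bddBelow ⟨E, hE𝒪, rfl⟩
      have h2 : sInf E < x := by
        have := hxE
        rw [orbital_eq_Ioo (hg.1) hE] at this
        exact this.1
      have h3 : x < sInf S := lt_of_lt_of_le hx.2 (min_le_left _ _)
      linarith
  · refine ⟨sSup B, orbital_inf_lt_sup hh hB, ?_⟩
    intro x hx hxsupp
    set E := connectedComponentIn (Supp ⇑g) x with hEdef
    have hE : IsOrbital ⇑g E := ⟨_, hxsupp, rfl⟩
    have hxE : x ∈ E := mem_connectedComponentIn hxsupp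
    have hxB : x ∈ B := by
      rw [orbital_eq_Ioo hh hB]
      exact ⟨hx.1, hx.2⟩
    exact hne ⟨sInf E, ⟨E, ⟨hE, ⟨x, hxE, hxB⟩⟩, rfl⟩⟩

end PLdepth9

namespace PLdepth10
open PLdepth PLdepth2 PLdepth3 PLdepth4 PLdepth5 PLdepth6 PLdepth7 PLdepth8 PLdepth9

variable {G : Subgroup (Equiv.Perm ℝ)} {g h : Equiv.Perm ℝ} {A B : Set ℝ} {n : ℕ}

/-- The key level construction: given nested orbitals `A ⊊ B` of elements of `G`,
and a compact `[p,q] ⊆ A`, there is a commutator with an orbital containing `[p,q]`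
whose closure lies inside `B`. -/
lemma level (hG : ∀ g ∈ G, PLHomeo g)
    (Hmax : ∀ T, IsTower G T → T.Finite ∧ T.ncard ≤ n)
    (hgG : g ∈ G) (hhG : h ∈ G) (hA : IsOrbital ⇑g A) (hB : IsOrbital ⇑h B)
    (hAB : A ⊆ B) (hne : A ≠ B) {p q : ℝ} (hpq : p ≤ q) (hpqA : Icc p q ⊆ A) :
    ∃ f C, f ∈ ⁅G, G⁆ ∧ IsOrbital ⇑f C ∧ Icc p q ⊆ C ∧ closure C ⊆ B := by
  classical
  have hg := (hG g hgG).1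
  have hh := (hG h hhG).1
  have hrepB := orbital_eq_Ioo hh hB
  obtain ⟨hclaim, hfix₁, hfix₂⟩ := support_structure hG Hmax hgG hhG hA hB hAB hne
  -- a "downward" mover on B
  obtain ⟨h₀, hh₀G, hh₀, hB₀, hdown⟩ :
      ∃ h₀, h₀ ∈ G ∧ Homeo01 h₀ ∧ IsOrbital ⇑h₀ B ∧ ∀ x ∈ B, h₀ x < x := by
    rcases orbital_sign hh hB with hup | hdn
    · refine ⟨h⁻¹, inv_mem hhG, homeo_inv hh, orbital_inv hB, fun x hx => ?_⟩
      rw [inv_lt_iff hh]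
      exact hup x hx
    · exact ⟨h, hhG, hh, hB, hdn⟩
  have hfix₁' : h₀ (sInf B) = sInf B := orbital_fix_inf hh₀ hB₀
  have hfix₂' : h₀ (sSup B) = sSup B := orbital_fix_sup hh₀ hB₀
  -- gap above sInf B free of the support of g
  obtain ⟨μ, hμ, hgap⟩ := supp_gap (hG g hgG) hh hB hclaim
  -- basic position facts
  have hpB : p ∈ B := hAB (hpqA ⟨le_refl _, hpq⟩)
  have hqB : q ∈ B := hAB (hpqA ⟨hpq, le_refl _⟩)
  have hpB' : sInf B < p ∧ p < sSup B := by rw [hrepB] at hpB; exact ⟨hpB.1, hpB.2⟩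
  have hqB' : sInf B < q ∧ q < sSup B := by rw [hrepB] at hqB; exact ⟨hqB.1, hqB.2⟩
  set r := (q + sSup B)/2 with hr
  have hrB : r ∈ B := by
    rw [hrepB]
    constructor
    · rw [hr]; have := hqB'.1; have := hqB'.2; linarith
    · rw [hr]; have := hqB'.2; linarith
  have hqr : q < r := by rw [hr]; have := hqB'.2; linarith
  set wpt := (sInf B + min μ r)/2 with hwpt
  have hwptB : wpt ∈ B := by
    have h1 : sInf B < min μ r := by
      apply lt_min hμ
      rw [hrepB] at hrB; exact hrB.1
    rw [hrepB]
    constructor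
    · rw [hwpt]; linarith
    · have h2 : min μ r ≤ r := min_le_right _ _
      have h3 : r < sSup B := by rw [hrepB] at hrB; exact hrB.2
      rw [hwpt]; linarith
  have hwptμ : wpt < μ := by
    have h1 : sInf B < min μ r := by
      apply lt_min hμ
      rw [hrepB] at hrB; exact hrB.1
    have h2 : min μ r ≤ μ := min_le_left _ _
    rw [hwpt]; linarith
  obtain ⟨k, hk⟩ := reach_down hh₀ hB₀ hdown hrB hwptB
  -- the commutator
  set w : Equiv.Perm ℝ := (h₀ ^ k)⁻¹ with hwdef
  set f : Equiv.Perm ℝ := g * w * g⁻¹ * w⁻¹ with hfdef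
  have hfG : f ∈ ⁅G, G⁆ := by
    have : f = ⁅g, w⁆ := rfl
    rw [this]
    exact Subgroup.commutator_mem_commutator hgG (inv_mem (pow_mem hh₀G k))
  have hwG : w ∈ G := inv_mem (pow_mem hh₀G k)
  have hfhomeo : Homeo01 f := (hG f (mul_mem (mul_mem (mul_mem hgG hwG) (inv_mem hgG)) (inv_mem hwG))).1
  -- f agrees with g on Ioo (sInf B) r
  have hagree : ∀ x ∈ Ioo (sInf B) r, f x = g x := by
    intro x hx
    have hxB : x ∈ B := by
      rw [hrepB]
      refine ⟨hx.1, lt_trans hx.2 ?_⟩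
      rw [hrepB] at hrB; exact hrB.2
    have hy : (h₀ ^ k) x ∈ B := pow_mem_orbital hh₀ hB₀ hxB k
    have hyμ : (h₀ ^ k) x < μ := by
      have hmono := (homeo_pow hh₀ k).1
      have h1 : (h₀ ^ k) x < (h₀ ^ k) r := hmono hx.2
      linarith
    have hynotsupp : (h₀ ^ k) x ∉ Supp ⇑g := by
      apply hgap
      constructor
      · rw [orbital_eq_Ioo hh₀ hB₀] at hy; exact hy.1
      · exact hyμ
    have hgfix : g⁻¹ ((h₀ ^ k) x) = (h₀ ^ k) x := by
      rw [fix_iff_inv_fix]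
      by_contra hc
      exact hynotsupp hc
    show g (w (g⁻¹ (w⁻¹ x))) = g x
    have hw1 : w⁻¹ x = (h₀ ^ k) x := by rw [hwdef, inv_inv]
    rw [hw1, hgfix, hwdef]
    rw [show ((h₀ ^ k)⁻¹) ((h₀ ^ k) x) = x from (h₀ ^ k).inv_apply_self x]
  -- [p,q] is in the support of f
  have hIccA : ∀ x ∈ Icc p q, x ∈ Ioo (sInf B) r := by
    intro x hx
    constructor
    · have := hpB'.1; have := hx.1; linarith
    · have := hx.2; linarith
  have hIccSupp : Icc p q ⊆ Supp ⇑f := by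
    intro x hx
    rw [mem_supp_iff, hagree x (hIccA x hx)]
    exact mem_supp_iff.1 (orbital_subset hA (hpqA hx))
  have hpSupp : p ∈ Supp ⇑f := hIccSupp ⟨le_refl _, hpq⟩
  set C := connectedComponentIn (Supp ⇑f) p with hCdef
  have hC : IsOrbital ⇑f C := ⟨p, hpSupp, rfl⟩
  have hIccC : Icc p q ⊆ C :=
    (isPreconnected_Icc).subset_connectedComponentIn ⟨le_refl _, hpq⟩ hIccSupp
  -- germ windows at the two endpoints of B
  have hwfix₁ : w (sInf B) = sInf B := by
    rw [hwdef, fix_iff_inv_fix]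
    exact pow_fix hfix₁' k
  have hwfix₂ : w (sSup B) = sSup B := by
    rw [hwdef, fix_iff_inv_fix]
    exact pow_fix hfix₂' k
  have hwPL : PLHomeo w := hG w hwG
  obtain ⟨δ₁, hδ₁, hwin₁⟩ := comm_id_near_right (hG g hgG) hwPL hfix₁ hwfix₁
  obtain ⟨δ₂, hδ₂, hwin₂⟩ := comm_id_near_left (hG g hgG) hwPL hfix₂ hwfix₂
  -- C stays within B
  refine ⟨f, C, hfG, hC, hIccC, ?_⟩
  have hCsub : C ⊆ Icc (sInf B + δ₁) (sSup B - δ₂) := by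
    intro y hy
    have hySupp : y ∈ Supp ⇑f := connectedComponentIn_subset _ _ hy
    have hpC : p ∈ C := hIccC ⟨le_refl _, hpq⟩
    have hord : OrdConnected C := (orbital_preconn hC).ordConnected
    have hW₁ : ∀ z ∈ Ioo (sInf B) (sInf B + δ₁), z ∉ Supp ⇑f := by
      intro z hz hzs
      exact hzs (hwin₁ z hz)
    have hW₂ : ∀ z ∈ Ioo (sSup B - δ₂) (sSup B), z ∉ Supp ⇑f := by
      intro z hz hzs
      exact hzs (hwin₂ z hz)
    have hpl : sInf B + δ₁ ≤ p := by
      by_contra hc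
      push_neg at hc
      exact hW₁ p ⟨hpB'.1, hc⟩ hpSupp
    have hpu : p ≤ sSup B - δ₂ := by
      by_contra hc
      push_neg at hc
      exact hW₂ p ⟨hc, hpB'.2⟩ hpSupp
    constructor
    · by_contra hc
      push_neg at hc
      -- y < sInf B + δ₁ ≤ p ; pick z in the window between
      set z := max y (sInf B) |> fun m => (m + (sInf B + δ₁))/2 with hzdef
      have hz1 : y < sInf B + δ₁ := hc
      have hzval : z = (max y (sInf B) + (sInf B + δ₁))/2 := rfl
      have hmlt : max y (sInf B) < sInf B + δ₁ := max_lt hc (by linarith)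
      have hzy : y ≤ z := by
        have : y ≤ max y (sInf B) := le_max_left _ _
        rw [hzval]; linarith
      have hzp : z ≤ p := by
        rw [hzval]
        have : max y (sInf B) ≤ sInf B + δ₁ := hmlt.le
        linarith
      have hzC : z ∈ C := hord.out hy hpC ⟨hzy, hzp⟩
      have hzW : z ∈ Ioo (sInf B) (sInf B + δ₁) := by
        constructor
        · rw [hzval]
          have : sInf B ≤ max y (sInf B) := le_max_right _ _
          linarith
        · rw [hzval]; linarith
      exact hW₁ z hzW (connectedComponentIn_subset _ _ hzC)
    · by_contra hc
      push_neg at hc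
      set z := (min y (sSup B) + (sSup B - δ₂))/2 with hzdef
      have hmgt : sSup B - δ₂ < min y (sSup B) := lt_min hc (by linarith)
      have hzy : z ≤ y := by
        have : min y (sSup B) ≤ y := min_le_left _ _
        rw [hzdef]; linarith
      have hzp : p ≤ z := by
        rw [hzdef]
        have : sSup B - δ₂ ≤ min y (sSup B) := hmgt.le
        linarith
      have hzC : z ∈ C := hord.out hpC hy ⟨hzp, hzy⟩
      have hzW : z ∈ Ioo (sSup B - δ₂) (sSup B) := by
        constructor
        · rw [hzdef]; linarith
        · rw [hzdef]
          have : min y (sSup B) ≤ sSup B := min_le_right _ _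
          linarith
      exact hW₂ z hzW (connectedComponentIn_subset _ _ hzC)
  have : closure C ⊆ Icc (sInf B + δ₁) (sSup B - δ₂) :=
    closure_minimal hCsub isClosed_Icc
  apply this.trans
  intro y hy
  have h1 : sInf B < y := by linarith [hy.1]
  have h2 : y < sSup B := by linarith [hy.2]
  rw [hrepB]
  exact ⟨h1, h2⟩
end PLdepth10

namespace PLdepth11
open PLdepth PLdepth2 PLdepth3 PLdepth4 PLdepth5 PLdepth6 PLdepth7 PLdepth8 PLdepth9

variable {G : Subgroup (Equiv.Perm ℝ)} {n : ℕ}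

lemma gsupp_open (hG : ∀ g ∈ G, PLHomeo g) : IsOpen (GSupp G) := by
  have : GSupp G = ⋃ (g : G), Supp ⇑(g : Equiv.Perm ℝ) := by
    ext x
    simp only [GSupp, mem_setOf_eq, mem_iUnion]
    constructor
    · rintro ⟨g, hgG, hgx⟩
      exact ⟨⟨g, hgG⟩, hgx⟩
    · rintro ⟨⟨g, hgG⟩, hgx⟩
      exact ⟨g, hgG, hgx⟩
  rw [this]
  exact isOpen_iUnion fun g => supp_open (hG g g.2).1

lemma gsupp_subset (hG : ∀ g ∈ G, PLHomeo g) : GSupp G ⊆ Ioo (0:ℝ) 1 := by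
  rintro x ⟨g, hgG, hgx⟩
  by_contra hc
  exact hgx ((hG g hgG).1.2 x hc)

lemma not_gsupp_fix {x : ℝ} (hx : x ∉ GSupp G) {g : Equiv.Perm ℝ} (hgG : g ∈ G) : g x = x := by
  by_contra hc
  exact hx ⟨g, hgG, hc⟩

lemma comp_boundary_not_mem {F : Set ℝ} (hF : IsOpen F) {x₀ : ℝ} (hx₀ : x₀ ∈ F) {y : ℝ}
    (hy : y ∉ connectedComponentIn F x₀)
    (hcl : ∀ ε > 0, ∃ z ∈ connectedComponentIn F x₀, |z - y| < ε) : y ∉ F := by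
  intro hy'
  rcases Metric.isOpen_iff.1 hF y hy' with ⟨ε, hε, hball⟩
  obtain ⟨z, hz, hzy⟩ := hcl ε hε
  have hzc : z ∈ connectedComponentIn F y := by
    have hball' : Metric.ball y ε ⊆ connectedComponentIn F y := by
      apply IsPreconnected.subset_connectedComponentIn _ (Metric.mem_ball_self hε) hball
      exact (convex_ball y ε).isPreconnected
    exact hball' (by simpa [Real.dist_eq] using hzy)
  have h1 : connectedComponentIn F z = connectedComponentIn F x₀ :=
    (connectedComponentIn_eq hz).symm
  have h2 : connectedComponentIn F z = connectedComponentIn F y :=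
    (connectedComponentIn_eq hzc).symm
  have : y ∈ connectedComponentIn F x₀ := by
    rw [← h1, h2]; exact mem_connectedComponentIn hy'
  exact hy this

/-- Structure of a component of an open bounded subset of the line. -/
lemma comp_structure {F : Set ℝ} (hF : IsOpen F) (hFsub : F ⊆ Ioo (0:ℝ) 1)
    {x₀ : ℝ} (hx₀ : x₀ ∈ F) :
    (connectedComponentIn F x₀ = Ioo (sInf (connectedComponentIn F x₀))
      (sSup (connectedComponentIn F x₀))) ∧
    sInf (connectedComponentIn F x₀) ∉ F ∧ sSup (connectedComponentIn F x₀) ∉ F := by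
  set K := connectedComponentIn F x₀ with hK
  have hKopen : IsOpen K := hF.connectedComponentIn
  have hKne : K.Nonempty := ⟨x₀, mem_connectedComponentIn hx₀⟩
  have hKsub : K ⊆ Ioo (0:ℝ) 1 := (connectedComponentIn_subset _ _).trans hFsub
  have hbb : BddBelow K := (bddBelow_Ioo : BddBelow (Ioo (0:ℝ) 1)).mono hKsub
  have hba : BddAbove K := (bddAbove_Ioo : BddAbove (Ioo (0:ℝ) 1)).mono hKsub
  have hrep := open_preconn_eq_Ioo hKopen isPreconnected_connectedComponentIn hKne hbb hba
  have hIS : sInf K < sSup K := by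
    obtain ⟨z, hz⟩ := hKne
    have := hz
    rw [hrep] at this
    exact lt_trans this.1 this.2
  refine ⟨hrep, ?_, ?_⟩
  · apply comp_boundary_not_mem hF hx₀ (sInf_not_mem_of_open hKopen hbb)
    intro ε hε
    have h2 : sInf K < min (sInf K + ε) (sSup K) := by
      simp only [lt_min_iff]; exact ⟨by linarith, hIS⟩
    obtain ⟨z, hz, hz2⟩ := exists_lt_of_csInf_lt hKne h2
    refine ⟨z, hz, ?_⟩
    have := csInf_le hbb hz
    rw [abs_of_nonneg (by linarith)]
    have := lt_min_iff.1 hz2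
    linarith [this.1]
  · apply comp_boundary_not_mem hF hx₀ (sSup_not_mem_of_open hKopen hba)
    intro ε hε
    have h2 : max (sSup K - ε) (sInf K) < sSup K := by
      simp only [max_lt_iff]; exact ⟨by linarith, hIS⟩
    obtain ⟨z, hz, hz2⟩ := exists_lt_of_lt_csSup hKne h2
    refine ⟨z, hz, ?_⟩
    have := le_csSup hba hz
    rw [abs_of_nonpos (by linarith)]
    have := max_lt_iff.1 hz2
    linarith [this.1]

/-- Covering lemma: any compact piece of a component of the group support is moved
up entirely by a single element. -/
lemma covering (hG : ∀ g ∈ G, PLHomeo g) {z₀ : ℝ} (hz₀ : z₀ ∈ GSupp G) {p q : ℝ}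
    (hp : p ∈ connectedComponentIn (GSupp G) z₀) (hq : q ∈ connectedComponentIn (GSupp G) z₀)
    (hpq : p ≤ q) :
    ∃ w ∈ G, ∀ x ∈ Icc p q, x < w x := by
  set K := connectedComponentIn (GSupp G) z₀ with hK
  obtain ⟨hrep, hinf, hsup⟩ := comp_structure (gsupp_open hG) (gsupp_subset hG) hz₀
  rw [← hK] at hrep hinf hsup
  have hKsub : K ⊆ GSupp G := connectedComponentIn_subset _ _
  -- every element of G preserves K
  have hKinv : ∀ w : Equiv.Perm ℝ, w ∈ G → ⇑w '' K = K := by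
    intro w hwG
    have hw := (hG w hwG).1
    conv_lhs => rw [hrep]
    rw [image_Ioo hw, not_gsupp_fix hinf hwG, not_gsupp_fix hsup hwG, ← hrep]
  set Λ := (fun v : Equiv.Perm ℝ => v p) '' (G : Set (Equiv.Perm ℝ)) with hΛ
  have hΛK : Λ ⊆ K := by
    rintro _ ⟨v, hvG, rfl⟩
    rw [← hKinv v hvG]
    exact mem_image_of_mem _ hp
  have hΛne : Λ.Nonempty := ⟨p, 1, one_mem G, rfl⟩
  have hba : BddAbove K := by
    apply (bddAbove_Ioo : BddAbove (Ioo (0:ℝ) 1)).mono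
    exact (connectedComponentIn_subset _ _).trans (gsupp_subset hG)
  have hΛbdd : BddAbove Λ := hba.mono hΛK
  set σ := sSup Λ with hσ
  have hσK : σ ≤ sSup K := csSup_le hΛne fun y hy => by
    have := hΛK hy
    rw [hrep] at this
    exact this.2.le
  have hpσ : p ≤ σ := le_csSup hΛbdd ⟨1, one_mem G, rfl⟩
  have hfixed : ∀ u : Equiv.Perm ℝ, u ∈ G → u σ = σ := by
    intro u huG
    have hu := (hG u huG).1
    have hmap : u σ = sSup (⇑u '' Λ) :=
      Monotone.map_csSup_of_continuousAt (cont hu).continuousAt hu.1.monotone hΛne hΛbdd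
    have himg : ⇑u '' Λ = Λ := by
      apply Subset.antisymm
      · rintro _ ⟨_, ⟨v, hvG, rfl⟩, rfl⟩
        exact ⟨u * v, mul_mem huG hvG, rfl⟩
      · rintro _ ⟨v, hvG, rfl⟩
        refine ⟨(u⁻¹ * v) p, ⟨u⁻¹ * v, mul_mem (inv_mem huG) hvG, rfl⟩, ?_⟩
        show u ((u⁻¹ * v) p) = v p
        rw [mul_apply, u.apply_inv_self]
    rw [hmap, himg]
  have hσtop : σ = sSup K := by
    rcases lt_or_eq_of_le hσK with hlt | heq
    · exfalso
      have hσmem : σ ∈ K := by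
        rw [hrep]
        refine ⟨?_, hlt⟩
        have : p ∈ Ioo (sInf K) (sSup K) := hrep ▸ hp
        exact lt_of_lt_of_le this.1 hpσ
      obtain ⟨u, huG, hu⟩ := hKsub hσmem
      exact hu (hfixed u huG)
    · exact heq
  have hqσ : q < σ := by
    rw [hσtop]
    have : q ∈ Ioo (sInf K) (sSup K) := hrep ▸ hq
    exact this.2
  obtain ⟨_, ⟨v, hvG, rfl⟩, hqv⟩ := exists_lt_of_lt_csSup hΛne hqσ
  refine ⟨v, hvG, fun x hx => ?_⟩
  have : v p ≤ v x := (hG v hvG).1.1.monotone hx.1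
  linarith [hx.2]

end PLdepth11

namespace PLdepth12
open PLdepth PLdepth2 PLdepth3 PLdepth4 PLdepth5 PLdepth6 PLdepth7 PLdepth8 PLdepth9 PLdepth11

variable {G : Subgroup (Equiv.Perm ℝ)} {n : ℕ}

def fixRight (β : ℝ) : Subgroup (Equiv.Perm ℝ) where
  carrier := {f : Equiv.Perm ℝ | ∃ δ > 0, ∀ x ∈ Ioo β (β + δ), f x = x}
  one_mem' := ⟨1, one_pos, fun x _ => rfl⟩
  mul_mem' := by
    rintro a b ⟨δa, hδa, ha⟩ ⟨δb, hδb, hb⟩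
    refine ⟨min δa δb, lt_min hδa hδb, fun x hx => ?_⟩
    have hxb : x ∈ Ioo β (β + δb) :=
      ⟨hx.1, lt_of_lt_of_le hx.2 (by have := min_le_right δa δb; linarith)⟩
    have hxa : x ∈ Ioo β (β + δa) :=
      ⟨hx.1, lt_of_lt_of_le hx.2 (by have := min_le_left δa δb; linarith)⟩
    show a (b x) = x
    rw [hb x hxb, ha x hxa]
  inv_mem' := by
    rintro a ⟨δ, hδ, ha⟩
    refine ⟨δ, hδ, fun x hx => ?_⟩
    conv_lhs => rw [← ha x hx]
    exact a.inv_apply_self x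

def fixLeft (β : ℝ) : Subgroup (Equiv.Perm ℝ) where
  carrier := {f : Equiv.Perm ℝ | ∃ δ > 0, ∀ x ∈ Ioo (β - δ) β, f x = x}
  one_mem' := ⟨1, one_pos, fun x _ => rfl⟩
  mul_mem' := by
    rintro a b ⟨δa, hδa, ha⟩ ⟨δb, hδb, hb⟩
    refine ⟨min δa δb, lt_min hδa hδb, fun x hx => ?_⟩
    have hxb : x ∈ Ioo (β - δb) β :=
      ⟨lt_of_le_of_lt (by have := min_le_right δa δb; linarith) hx.1, hx.2⟩
    have hxa : x ∈ Ioo (β - δa) β :=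
      ⟨lt_of_le_of_lt (by have := min_le_left δa δb; linarith) hx.1, hx.2⟩
    show a (b x) = x
    rw [hb x hxb, ha x hxa]
  inv_mem' := by
    rintro a ⟨δ, hδ, ha⟩
    refine ⟨δ, hδ, fun x hx => ?_⟩
    conv_lhs => rw [← ha x hx]
    exact a.inv_apply_self x

lemma commG_le_fixRight (hG : ∀ g ∈ G, PLHomeo g) {β : ℝ} (hfixall : ∀ g ∈ G, g β = β) :
    ⁅G, G⁆ ≤ fixRight β := by
  rw [Subgroup.commutator_le]
  intro g₁ hg₁ g₂ hg₂
  obtain ⟨δ, hδ, hwin⟩ :=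
    comm_id_near_right (hG g₁ hg₁) (hG g₂ hg₂) (hfixall g₁ hg₁) (hfixall g₂ hg₂)
  exact ⟨δ, hδ, hwin⟩

lemma commG_le_fixLeft (hG : ∀ g ∈ G, PLHomeo g) {β : ℝ} (hfixall : ∀ g ∈ G, g β = β) :
    ⁅G, G⁆ ≤ fixLeft β := by
  rw [Subgroup.commutator_le]
  intro g₁ hg₁ g₂ hg₂
  obtain ⟨δ, hδ, hwin⟩ :=
    comm_id_near_left (hG g₁ hg₁) (hG g₂ hg₂) (hfixall g₁ hg₁) (hfixall g₂ hg₂)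
  exact ⟨δ, hδ, hwin⟩

lemma commG_le (G : Subgroup (Equiv.Perm ℝ)) : ⁅G, G⁆ ≤ G := by
  rw [Subgroup.commutator_le]
  intro g₁ hg₁ g₂ hg₂
  exact mul_mem (mul_mem (mul_mem hg₁ hg₂) (inv_mem hg₁)) (inv_mem hg₂)

lemma upper (hG : ∀ g ∈ G, PLHomeo g) (hd : DepthEq G n) :
    ∀ T, IsTower ⁅G, G⁆ T → T.Finite ∧ T.ncard ≤ n - 1 := by
  intro T hT
  have htG : IsTower G T := by
    refine ⟨fun p hp => ⟨commG_le G ((hT.1 p hp).1), (hT.1 p hp).2⟩, hT.2.1, hT.2.2⟩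
  obtain ⟨hfin, hle⟩ := hd.2 T htG
  refine ⟨hfin, ?_⟩
  by_contra hc
  push_neg at hc
  have hkn : T.ncard = n := by omega
  have hn1 : 1 ≤ n := by omega
  have hne : T.Nonempty := by
    apply Set.nonempty_of_ncard_ne_zero
    omega
  obtain ⟨pstar, hpstarT, hmax⟩ := Set.Finite.exists_maximalFor (fun pr => pr.1) T hfin hne
  obtain ⟨hcG', hcA⟩ := hT.1 pstar hpstarT
  set c := pstar.2 with hcdef
  set A := pstar.1 with hAdef
  have hcG : c ∈ G := commG_le G hcG'
  have hch : Homeo01 c := (hG c hcG).1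
  obtain ⟨z₀, hz₀A⟩ := orbital_nonempty hcA
  have hsuppsub : Supp ⇑c ⊆ GSupp G := fun x hx => ⟨c, hcG, hx⟩
  have hz₀ : z₀ ∈ GSupp G := hsuppsub (orbital_subset hcA hz₀A)
  set K := connectedComponentIn (GSupp G) z₀ with hK
  obtain ⟨hrep, hinf, hsup⟩ := comp_structure (gsupp_open hG) (gsupp_subset hG) hz₀
  rw [← hK] at hrep hinf hsup
  have hAK : A ⊆ K :=
    (orbital_preconn hcA).subset_connectedComponentIn hz₀A
      ((orbital_subset hcA).trans hsuppsub)
  have hfixall₁ : ∀ g ∈ G, g (sInf K) = sInf K := fun g hg => not_gsupp_fix hinf hg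
  have hfixall₂ : ∀ g ∈ G, g (sSup K) = sSup K := fun g hg => not_gsupp_fix hsup hg
  obtain ⟨δ₁, hδ₁, hwin₁⟩ := commG_le_fixRight hG hfixall₁ hcG'
  obtain ⟨δ₂, hδ₂, hwin₂⟩ := commG_le_fixLeft hG hfixall₂ hcG'
  have hrepA := orbital_eq_Ioo hch hcA
  have hISA := orbital_inf_lt_sup hch hcA
  have hbound : ∀ y ∈ A, sInf K + δ₁ ≤ y ∧ y ≤ sSup K - δ₂ := by
    intro y hy
    have hyK : y ∈ K := hAK hy
    have hyK' : sInf K < y ∧ y < sSup K := by rw [hrep] at hyK; exact ⟨hyK.1, hyK.2⟩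
    have hySupp : y ∈ Supp ⇑c := orbital_subset hcA hy
    constructor
    · by_contra hcon
      push_neg at hcon
      exact hySupp (hwin₁ y ⟨hyK'.1, hcon⟩)
    · by_contra hcon
      push_neg at hcon
      exact hySupp (hwin₂ y ⟨hcon, hyK'.2⟩)
  have hpbound : sInf K + δ₁ ≤ sInf A :=
    le_csInf (orbital_nonempty hcA) fun y hy => (hbound y hy).1
  have hqbound : sSup A ≤ sSup K - δ₂ :=
    csSup_le (orbital_nonempty hcA) fun y hy => (hbound y hy).2
  have hpK : sInf A ∈ K := by
    rw [hrep]
    exact ⟨by linarith, by linarith⟩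
  have hqK : sSup A ∈ K := by
    rw [hrep]
    exact ⟨by linarith, by linarith⟩
  obtain ⟨v, hvG, hmove⟩ := covering hG hz₀ hpK hqK hISA.le
  have hIccSupp : Icc (sInf A) (sSup A) ⊆ Supp ⇑v := fun x hx => (hmove x hx).ne'
  have hpSupp : sInf A ∈ Supp ⇑v := hIccSupp ⟨le_refl _, hISA.le⟩
  set C' := connectedComponentIn (Supp ⇑v) (sInf A) with hC'def
  have hC' : IsOrbital ⇑v C' := ⟨_, hpSupp, rfl⟩
  have hIccC' : Icc (sInf A) (sSup A) ⊆ C' :=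
    isPreconnected_Icc.subset_connectedComponentIn ⟨le_refl _, hISA.le⟩ hIccSupp
  have hAC' : A ⊆ C' := by
    intro y hy
    apply hIccC'
    have := hy
    rw [hrepA] at this
    exact ⟨this.1.le, this.2.le⟩
  have hpC' : sInf A ∈ C' := hIccC' ⟨le_refl _, hISA.le⟩
  have hpnotA : sInf A ∉ A :=
    sInf_not_mem_of_open (orbital_open hch hcA) (orbital_bddBelow hch hcA)
  have htsubA : ∀ t ∈ T, t.1 ⊆ A := by
    intro t ht
    rcases htG.2.1 t ht pstar hpstarT with hsub | hsub
    · exact hsub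
    · have := hmax ht hsub
      exact this
  have hC'ne : ∀ t ∈ T, t.1 ≠ C' := by
    intro t ht hcon
    have : sInf A ∈ t.1 := by rw [hcon]; exact hpC'
    exact hpnotA (htsubA t ht this)
  have hnotmem : (C', v) ∉ T := by
    intro hmem
    exact hC'ne (C', v) hmem rfl
  set T' := insert (C', v) T with hT'
  have htower' : IsTower G T' := by
    refine ⟨?_, ?_, ?_⟩
    · intro t ht
      rcases mem_insert_iff.1 ht with rfl | ht
      · exact ⟨hvG, hC'⟩
      · exact htG.1 t ht
    · intro t ht u hu
      rcases mem_insert_iff.1 ht with rfl | ht <;> rcases mem_insert_iff.1 hu with rfl | hu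
      · exact Or.inl (subset_refl _)
      · exact Or.inr ((htsubA u hu).trans hAC')
      · exact Or.inl ((htsubA t ht).trans hAC')
      · exact htG.2.1 t ht u hu
    · intro t ht u hu heq
      rcases mem_insert_iff.1 ht with rfl | ht <;> rcases mem_insert_iff.1 hu with rfl | hu
      · rfl
      · exact absurd heq.symm (hC'ne u hu)
      · exact absurd heq (hC'ne t ht)
      · exact htG.2.2 t ht u hu heq
  have hcard' : T'.ncard = n + 1 := by
    rw [hT', Set.ncard_insert_of_notMem hnotmem hfin, hkn]
  have := (hd.2 T' htower').2
  omega

end PLdepth12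

namespace PLdepth13
open PLdepth PLdepth2 PLdepth3 PLdepth4 PLdepth5 PLdepth6 PLdepth7 PLdepth8 PLdepth9 PLdepth11 PLdepth12

variable {G : Subgroup (Equiv.Perm ℝ)} {n : ℕ}

lemma tower_subset {T T' : Set (Set ℝ × Equiv.Perm ℝ)} (hT : IsTower G T) (hsub : T' ⊆ T) :
    IsTower G T' :=
  ⟨fun p hp => hT.1 p (hsub hp), fun p hp q hq => hT.2.1 p (hsub hp) q (hsub hq),
    fun p hp q hq => hT.2.2 p (hsub hp) q (hsub hq)⟩

lemma tower_chain (m : ℕ) : ∀ T : Set (Set ℝ × Equiv.Perm ℝ), IsTower G T → T.Finite →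
    T.ncard = m →
    ∃ (A : Fin m → Set ℝ) (g : Fin m → Equiv.Perm ℝ),
      (∀ i, (A i, g i) ∈ T) ∧ ∀ i j : Fin m, i < j → A i ⊆ A j ∧ A i ≠ A j := by
  induction m with
  | zero =>
    intro T _ _ _
    exact ⟨Fin.elim0, Fin.elim0, fun i => i.elim0, fun i => i.elim0⟩
  | succ m ih =>
    intro T hT hfin hcard
    have hne : T.Nonempty := Set.nonempty_of_ncard_ne_zero (by omega)
    obtain ⟨p₀, hp₀T, hmin⟩ := Set.Finite.exists_minimalFor (fun pr => pr.1) T hfin hne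
    have hp₀sub : ∀ t ∈ T, p₀.1 ⊆ t.1 := by
      intro t ht
      rcases hT.2.1 p₀ hp₀T t ht with hs | hs
      · exact hs
      · exact hmin ht hs
    set T' := T \ {p₀} with hT'
    have hT'sub : T' ⊆ T := diff_subset
    have hT'tower : IsTower G T' := tower_subset hT hT'sub
    have hT'fin : T'.Finite := hfin.subset hT'sub
    have hT'card : T'.ncard = m := by
      rw [hT', Set.ncard_diff_singleton_of_mem hp₀T, hcard]
      omega
    obtain ⟨A', g', hmem', hchain'⟩ := ih T' hT'tower hT'fin hT'card
    have hp₀ne : ∀ i : Fin m, p₀.1 ≠ A' i := by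
      intro i hc
      have hAT' : (A' i, g' i) ∈ T' := hmem' i
      have : p₀ = (A' i, g' i) := hT.2.2 p₀ hp₀T _ (hT'sub hAT') hc
      rw [← this] at hAT'
      exact hAT'.2 rfl
    refine ⟨Fin.cons p₀.1 A', Fin.cons p₀.2 g', ?_, ?_⟩
    · intro i
      rcases Fin.eq_zero_or_eq_succ i with rfl | ⟨i', rfl⟩
      · simp only [Fin.cons_zero]
        rw [Prod.mk.eta]
        exact hp₀T
      · simp only [Fin.cons_succ]
        exact hT'sub (hmem' i')
    · intro i j hij
      rcases Fin.eq_zero_or_eq_succ i with rfl | ⟨i', rfl⟩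
      · rcases Fin.eq_zero_or_eq_succ j with rfl | ⟨j', rfl⟩
        · exact absurd hij (lt_irrefl _)
        · simp only [Fin.cons_zero, Fin.cons_succ]
          exact ⟨hp₀sub _ (hT'sub (hmem' j')), hp₀ne j'⟩
      · rcases Fin.eq_zero_or_eq_succ j with rfl | ⟨j', rfl⟩
        · exact absurd hij (by simp [Fin.lt_def])
        · simp only [Fin.cons_succ]
          exact hchain' i' j' (by rwa [Fin.succ_lt_succ_iff] at hij)

end PLdepth13

namespace PLdepth14
open PLdepth PLdepth2 PLdepth3 PLdepth4 PLdepth5 PLdepth6 PLdepth7 PLdepth8 PLdepth9 PLdepth10 PLdepth11 PLdepth12 PLdepth13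

variable {G : Subgroup (Equiv.Perm ℝ)} {n : ℕ}

lemma lower_chain (hG : ∀ g ∈ G, PLHomeo g)
    (Hmax : ∀ T, IsTower G T → T.Finite ∧ T.ncard ≤ n) :
    ∀ (m : ℕ) (A : Fin (m+2) → Set ℝ) (g : Fin (m+2) → Equiv.Perm ℝ),
    (∀ i, g i ∈ G ∧ IsOrbital ⇑(g i) (A i)) →
    (∀ i j, i < j → A i ⊆ A j ∧ A i ≠ A j) →
    ∃ (C : Fin (m+1) → Set ℝ) (f : Fin (m+1) → Equiv.Perm ℝ),
      (∀ i, f i ∈ ⁅G, G⁆ ∧ IsOrbital ⇑(f i) (C i)) ∧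
      (∀ i j : Fin (m+1), i < j → closure (C i) ⊆ C j) ∧
      (∀ i : Fin (m+1), closure (C i) ⊆ A i.succ) := by
  intro m
  induction m with
  | zero =>
    intro A g hmem hchain
    have h01 : (0 : Fin 2) < 1 := by decide
    obtain ⟨hsub, hne⟩ := hchain 0 1 h01
    obtain ⟨z, hz⟩ := orbital_nonempty (hmem 0).2
    obtain ⟨fnew, Cnew, hfG, hforb, hIcc, hclo⟩ :=
      level hG Hmax (hmem 0).1 (hmem 1).1 (hmem 0).2 (hmem 1).2 hsub hne
        (le_refl z) (by rw [Icc_self]; exact singleton_subset_iff.2 hz)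
    refine ⟨fun _ => Cnew, fun _ => fnew, fun i => ⟨hfG, hforb⟩, ?_, ?_⟩
    · intro i j hij
      have h1 := i.isLt
      have h2 := j.isLt
      rw [Fin.lt_def] at hij
      omega
    · intro i
      have hi0 : i = 0 := by
        apply Fin.ext
        have := i.isLt
        omega
      rw [hi0]
      exact hclo
  | succ m ih =>
    intro A g hmem hchain
    set A' : Fin (m+2) → Set ℝ := fun i => A i.castSucc with hA'
    set g' : Fin (m+2) → Equiv.Perm ℝ := fun i => g i.castSucc with hg'
    obtain ⟨C', f', hCf', hchain', hclo'⟩ := ih A' g' (fun i => hmem i.castSucc)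
      (fun i j hij => hchain i.castSucc j.castSucc (by rwa [Fin.castSucc_lt_castSucc_iff]))
    set ℓ : Fin (m+1) := Fin.last m with hℓ
    have hfl := hCf' ℓ
    have hflG : f' ℓ ∈ G := commG_le G hfl.1
    have hflh : Homeo01 (f' ℓ) := (hG _ hflG).1
    have hrepC := orbital_eq_Ioo hflh hfl.2
    have hIS := orbital_inf_lt_sup hflh hfl.2
    have hcloC : closure (C' ℓ) = Icc (sInf (C' ℓ)) (sSup (C' ℓ)) := by
      conv_lhs => rw [hrepC]
      exact closure_Ioo hIS.ne
    set sec : Fin (m+3) := (Fin.last (m+1)).castSucc with hsec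
    set top : Fin (m+3) := Fin.last (m+2) with htop
    have hsectop : sec < top := Fin.castSucc_lt_last _
    obtain ⟨hsub, hne⟩ := hchain sec top hsectop
    have hsrc : closure (C' ℓ) ⊆ A sec := by
      have hllast := hclo' ℓ
      have hℓs : (ℓ.succ : Fin (m+2)) = Fin.last (m+1) := Fin.succ_last m
      rw [hℓs] at hllast
      exact hllast
    obtain ⟨fnew, Cnew, hfG, hforb, hIcc, hclo⟩ :=
      level hG Hmax (hmem sec).1 (hmem top).1 (hmem sec).2 (hmem top).2 hsub hne
        hIS.le (by rw [← hcloC]; exact hsrc)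
    have hIcc' : closure (C' ℓ) ⊆ Cnew := by rw [hcloC]; exact hIcc
    refine ⟨Fin.snoc C' Cnew, Fin.snoc f' fnew, ?_, ?_, ?_⟩
    · intro i
      induction i using Fin.lastCases with
      | last =>
        simp only [Fin.snoc_last]
        exact ⟨hfG, hforb⟩
      | cast j =>
        simp only [Fin.snoc_castSucc]
        exact hCf' j
    · intro i j hij
      revert hij
      induction j using Fin.lastCases with
      | last =>
        intro hij'
        have hine : i ≠ Fin.last (m+1) := ne_of_lt hij'
        obtain ⟨i', rfl⟩ := Fin.exists_castSucc_eq.2 hine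
        simp only [Fin.snoc_last, Fin.snoc_castSucc]
        rcases lt_or_eq_of_le (Fin.le_last i') with hi' | hi'
        · have h1 : closure (C' i') ⊆ C' ℓ := hchain' i' ℓ hi'
          have h2 : C' ℓ ⊆ closure (C' ℓ) := subset_closure
          exact h1.trans (h2.trans hIcc')
        · rw [hi']
          exact hIcc'
      | cast j' =>
        intro hij'
        have hine : i ≠ Fin.last (m+1) := by
          intro hc
          rw [hc] at hij'
          exact absurd hij' (not_lt.2 (Fin.castSucc_lt_last j').le)
        obtain ⟨i', rfl⟩ := Fin.exists_castSucc_eq.2 hine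
        simp only [Fin.snoc_castSucc]
        exact hchain' i' j' (by rwa [Fin.castSucc_lt_castSucc_iff] at hij')
    · intro i
      induction i using Fin.lastCases with
      | last =>
        simp only [Fin.snoc_last]
        have hte : (Fin.last (m+1)).succ = top := Fin.succ_last (m+1)
        rw [hte]
        exact hclo
      | cast j =>
        simp only [Fin.snoc_castSucc]
        have hce : (j.castSucc).succ = (j.succ).castSucc := (Fin.succ_castSucc j).symm
        rw [hce]
        exact hclo' j

end PLdepth14

open PLdepth PLdepth2 PLdepth3 PLdepth4 PLdepth5 PLdepth6 PLdepth7 PLdepth8 PLdepth9 PLdepth10 PLdepth11 PLdepth12 PLdepth13 PLdepth14 in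
theorem stmt11 (G : Subgroup (Equiv.Perm ℝ)) (hG : ∀ g ∈ G, PLHomeo g) (n : ℕ)
    (hn : 0 < n) (hd : DepthEq G n) : DepthEq ⁅G, G⁆ (n - 1) := by
  have Hmax := hd.2
  constructor
  · -- existence of a tower of height n - 1 in the derived subgroup
    rcases Nat.lt_or_ge n 2 with h2 | h2
    · -- n = 1 : the empty tower works
      have hn1 : n = 1 := by omega
      refine ⟨∅, ⟨?_, ?_, ?_⟩, finite_empty, by rw [Set.ncard_empty]; omega⟩
      · intro p hp; exact absurd hp (Set.notMem_empty p)
      · intro p hp; exact absurd hp (Set.notMem_empty p)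
      · intro p hp; exact absurd hp (Set.notMem_empty p)
    · obtain ⟨m, rfl⟩ : ∃ m, n = m + 2 := ⟨n - 2, by omega⟩
      obtain ⟨T, hT, hfin, hcard⟩ := hd.1
      obtain ⟨A, g, hmemT, hchain⟩ := tower_chain (m+2) T hT hfin hcard
      have hmem : ∀ i, g i ∈ G ∧ IsOrbital ⇑(g i) (A i) := fun i => hT.1 _ (hmemT i)
      obtain ⟨C, f, hCf, hchainC, _⟩ := lower_chain hG Hmax m A g hmem hchain
      have hCstrict : ∀ i j : Fin (m+1), i < j → C i ≠ C j := by
        intro i j hij hc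
        have hsub := hchainC i j hij
        rw [← hc] at hsub
        have hfiG : f i ∈ G := commG_le G (hCf i).1
        have hfih : Homeo01 (f i) := (hG _ hfiG).1
        have h1 : sSup (C i) ∈ closure (C i) :=
          csSup_mem_closure (orbital_nonempty (hCf i).2) (orbital_bddAbove hfih (hCf i).2)
        have h2 : sSup (C i) ∈ C i := hsub h1
        exact sSup_not_mem_of_open (orbital_open hfih (hCf i).2)
          (orbital_bddAbove hfih (hCf i).2) h2
      have hCinj : Function.Injective C := by
        intro i j hij
        rcases lt_trichotomy i j with hlt | heq | hgt
        · exact absurd hij (hCstrict i j hlt)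
        · exact heq
        · exact absurd hij.symm (hCstrict j i hgt)
      have hTnew : IsTower ⁅G, G⁆ ((fun i : Fin (m+1) => (C i, f i)) '' univ) := by
        refine ⟨?_, ?_, ?_⟩
        · rintro p ⟨i, -, rfl⟩
          exact ⟨(hCf i).1, (hCf i).2⟩
        · rintro p ⟨i, -, rfl⟩ q ⟨j, -, rfl⟩
          rcases lt_trichotomy i j with hlt | heq | hgt
          · exact Or.inl (subset_closure.trans (hchainC i j hlt))
          · rw [heq]; exact Or.inl (subset_refl _)
          · exact Or.inr (subset_closure.trans (hchainC j i hgt))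
        · rintro p ⟨i, -, rfl⟩ q ⟨j, -, rfl⟩ heq
          simp only at heq
          have := hCinj heq
          rw [this]
      refine ⟨_, hTnew, (finite_univ.image _), ?_⟩
      rw [Set.ncard_image_of_injective _ ?_, Set.ncard_univ]
      · simp
      · intro i j hij
        simp only [Prod.mk.injEq] at hij
        exact hCinj hij.1
  · exact upper hG hd
end

section
/- In a standard restricted wreath product C ≀ T with T torsion-free and C non-trivial, no non-trivial element of the base group commutes with any non-trivial element of the top group; consequently, for non-trivial b in the base group and non-trivial t in the top group, [[b,t],t] is a non-trivial element of the base group. -/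
noncomputable def shiftAddAut (C T : Type) [Group C] [Group T] (t : T) :
    (T →₀ Additive C) ≃+ (T →₀ Additive C) :=
  { Finsupp.equivCongrLeft (Equiv.mulLeft t) with
    map_add' := fun f g => by ext x; simp [Finsupp.equivCongrLeft] }

noncomputable def wrAction (C T : Type) [Group C] [Group T] :
    T →* MulAut (Multiplicative (T →₀ Additive C)) where
  toFun t := AddEquiv.toMultiplicative (shiftAddAut C T t)
  map_one' := by
    ext f : 1
    refine Finsupp.ext fun x => ?_
    change f (1⁻¹ * x) = f x
    simp
  map_mul' := fun s t => by
    ext f : 1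
    refine Finsupp.ext fun x => ?_
    change f ((s * t)⁻¹ * x) = f (t⁻¹ * (s⁻¹ * x))
    simp [mul_inv_rev, mul_assoc]

noncomputable abbrev Wr (C T : Type) [Group C] [Group T] :=
  SemidirectProduct (Multiplicative (T →₀ Additive C)) T (wrAction C T)

def Monoid.IsTorsionFree (G : Type*) [Monoid G] : Prop :=
  ∀ g : G, g ≠ 1 → ¬IsOfFinOrder g

open scoped commutatorElement

section Aux

variable {C T : Type} [Group C] [Group T]

lemma shift_fixed_false (hT : Monoid.IsTorsionFree T)
    {t : T} (ht : t ≠ 1) {f : T →₀ Additive C} (hf : f ≠ 0)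
    (h : ∀ x, f (t⁻¹ * x) = f x) : False := by
  obtain ⟨x₀, hx₀⟩ := Finsupp.support_nonempty_iff.2 hf
  have key : ∀ n : ℕ, f ((t⁻¹) ^ n * x₀) = f x₀ := by
    intro n
    induction n with
    | zero => simp
    | succ n ih => rw [pow_succ', mul_assoc, h, ih]
  have hmem : ∀ n : ℕ, (t⁻¹) ^ n * x₀ ∈ f.support := by
    intro n
    rw [Finsupp.mem_support_iff, key n]
    exact Finsupp.mem_support_iff.1 hx₀
  have hinj : Function.Injective (fun n : ℕ => (t⁻¹ : T) ^ n) :=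
    injective_pow_iff_not_isOfFinOrder.2 (hT t⁻¹ (inv_ne_one.2 ht))
  have : Function.Injective (fun n : ℕ => (⟨(t⁻¹) ^ n * x₀, hmem n⟩ : f.support)) := by
    intro a b hab
    apply hinj
    simpa [Subtype.ext_iff] using hab
  obtain ⟨a, b, hne, heq⟩ := Finite.exists_ne_map_eq_of_infinite
    (fun n : ℕ => (⟨(t⁻¹) ^ n * x₀, hmem n⟩ : f.support))
  exact hne (this heq)

lemma wrAction_ne (hT : Monoid.IsTorsionFree T)
    {t : T} (ht : t ≠ 1) {b : Multiplicative (T →₀ Additive C)} (hb : b ≠ 1) :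
    wrAction C T t b ≠ b := by
  intro h
  refine shift_fixed_false (f := b.toAdd) hT ht ?_ ?_
  · exact fun h0 => hb h0
  · intro x
    have := congrArg (fun z => (Multiplicative.toAdd z) x) h
    simpa [wrAction, shiftAddAut, Finsupp.equivCongrLeft, Finsupp.equivMapDomain_apply] using this


end Aux
section Aux2
variable {C T : Type} [Group C] [Group T]

lemma comm_inl_inr (n : Multiplicative (T →₀ Additive C)) (g : T) :
    (⁅(SemidirectProduct.inl n : Wr C T), SemidirectProduct.inr g⁆ : Wr C T)
      = SemidirectProduct.inl (n * wrAction C T g n⁻¹) := by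
  rw [commutatorElement_def, map_mul, SemidirectProduct.inl_aut]
  simp [mul_assoc]

end Aux2

theorem stmt19 (C T : Type) [Group C] [Group T] (hC : Nontrivial C)
    (hT : Monoid.IsTorsionFree T)
    (b : Multiplicative (T →₀ Additive C)) (t : T) (hb : b ≠ 1) (ht : t ≠ 1) :
    ¬ Commute ((SemidirectProduct.inl b : Wr C T)) (SemidirectProduct.inr t) ∧
    ∃ b' : Multiplicative (T →₀ Additive C), b' ≠ 1 ∧
      ⁅(⁅(SemidirectProduct.inl b : Wr C T), SemidirectProduct.inr t⁆ : Wr C T),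
          (SemidirectProduct.inr t : Wr C T)⁆ = SemidirectProduct.inl b' := by
  have hne : ∀ (s : T), s ≠ 1 → ∀ (n : Multiplicative (T →₀ Additive C)), n ≠ 1 →
      n * wrAction C T s n⁻¹ ≠ 1 := by
    intro s hs n hn h
    have h2 : wrAction C T s n⁻¹ = n⁻¹ := eq_inv_of_mul_eq_one_right h
    exact wrAction_ne hT hs (inv_ne_one.2 hn) h2
  constructor
  · intro h
    have h2 : (SemidirectProduct.inl (wrAction C T t b) : Wr C T) = SemidirectProduct.inl b := by
      rw [SemidirectProduct.inl_aut, ← h.eq, mul_assoc, ← map_mul]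
      simp
    exact wrAction_ne hT ht hb (SemidirectProduct.inl_injective h2)
  · set c := b * wrAction C T t b⁻¹ with hc
    have hcne : c ≠ 1 := hne t ht b hb
    exact ⟨c * wrAction C T t c⁻¹, hne t ht c hcne, by rw [comm_inl_inr, comm_inl_inr]⟩
end
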